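/- Let V be a finite-dimensional vector space over K = GF(2) and f : V → V a nilpotent K-linear endomorphism. Suppose V = ⟨u⟩ ⊕ ⟨v⟩ with e(u) = R, e(v) = S, and R + 1 < S. Then an f-invariant subspace X ⊆ V is characteristic and not hyperinvariant if and only if X = ⟨f^{R−s}(u) + f^{S−q}(v)⟩^c for some integers s, q satisfying 0 < s ≤ R, s < q, and R − s < S − q. -/

import Mathlib

open Module LinearMap

section Defs

variable {K V : Type*} [Field K] [AddCommGroup V] [Module K V]

/-- `α` commutes with `f`. -/
def Commutes (f : V →ₗ[K] V) (α : V ≃ₗ[K] V) : Prop :=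
  ∀ v, α (f v) = f (α v)

/-- `X` is hyperinvariant: invariant under every endomorphism commuting with `f`. -/
def Hyperinv (f : V →ₗ[K] V) (X : Submodule K V) : Prop :=
  ∀ g : V →ₗ[K] V, (∀ v, g (f v) = f (g v)) → ∀ x ∈ X, g x ∈ X

/-- `X` is characteristic: `f`-invariant and invariant under every automorphism
commuting with `f`. -/
def Charinv (f : V →ₗ[K] V) (X : Submodule K V) : Prop :=
  (∀ x ∈ X, f x ∈ X) ∧ ∀ α : V ≃ₗ[K] V, Commutes f α → ∀ x ∈ X, α x ∈ X

/-- The characteristic hull of a set `B`: the subspace spanned by all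
`f^i (α b)`, `b ∈ B`, `α` an automorphism commuting with `f`. -/
def charHull (f : V →ₗ[K] V) (B : Set V) : Submodule K V :=
  Submodule.span K
    {y | ∃ b ∈ B, ∃ i : ℕ, ∃ α : V ≃ₗ[K] V, Commutes f α ∧ y = (f ^ i) (α b)}

/-- The `f`-cyclic subspace generated by `x`. -/
def cyc (f : V →ₗ[K] V) (x : V) : Submodule K V :=
  Submodule.span K (Set.range fun i : ℕ => (f ^ i) x)

/-- The `f`-invariant span of a set `B`. -/
def invSpan (f : V →ₗ[K] V) (B : Set V) : Submodule K V :=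
  Submodule.span K {y | ∃ b ∈ B, ∃ i : ℕ, y = (f ^ i) b}

/-- The exponent of `x`: the least `ℓ` with `f^ℓ x = 0`. -/
noncomputable def expnt (f : V →ₗ[K] V) (x : V) : ℕ :=
  sInf {ℓ : ℕ | (f ^ ℓ) x = 0}

/-- The height of `x`: the largest `q` with `x ∈ f^q V`. -/
noncomputable def hgt (f : V →ₗ[K] V) (x : V) : ℕ :=
  sSup {q : ℕ | x ∈ LinearMap.range (f ^ q)}

/-- `u` is a generator of `V`: `V = ⟨u⟩ ⊕ V₂` for some `f`-invariant `V₂`. -/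
def IsGenerator (f : V →ₗ[K] V) (u : V) : Prop :=
  u ≠ 0 ∧ ∃ V₂ : Submodule K V, (∀ x ∈ V₂, f x ∈ V₂) ∧ IsCompl (cyc f u) V₂

/-- `(u 0, …, u (m-1))` is a generator tuple of `V`:
`V = ⟨u 0⟩ ⊕ ⋯ ⊕ ⟨u (m-1)⟩` with nondecreasing exponents. -/
def IsGenTuple {m : ℕ} (f : V →ₗ[K] V) (u : Fin m → V) : Prop :=
  DirectSum.IsInternal (fun i => cyc f (u i)) ∧ Monotone fun i => expnt f (u i)

/-- The Ulm invariant `d(f,r) = dim ((ker f ⊓ f^{r-1} V) / (ker f ⊓ f^r V))`. -/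
noncomputable def ulm (f : V →ₗ[K] V) (r : ℕ) : ℕ :=
  Module.finrank K
    (↥(LinearMap.ker f ⊓ LinearMap.range (f ^ (r - 1))) ⧸
      Submodule.comap (LinearMap.ker f ⊓ LinearMap.range (f ^ (r - 1))).subtype
        (LinearMap.ker f ⊓ LinearMap.range (f ^ r)))

/-- The largest hyperinvariant subspace contained in `X`
(the sum of all hyperinvariant subspaces contained in `X`). -/
noncomputable def largestHyperinv (f : V →ₗ[K] V) (X : Submodule K V) : Submodule K V :=
  sSup {W : Submodule K V | Hyperinv f W ∧ W ≤ X}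

end Defs

namespace Stmt2Aux

open Submodule

variable {V : Type*} [AddCommGroup V] [Module (ZMod 2) V]

theorem commutes_symm {f : V →ₗ[ZMod 2] V} {α : V ≃ₗ[ZMod 2] V} (h : Commutes f α) :
    Commutes f α.symm := by
  intro x
  apply α.injective
  rw [h, α.apply_symm_apply, α.apply_symm_apply]

theorem commutes_pow {f : V →ₗ[ZMod 2] V} {α : V ≃ₗ[ZMod 2] V} (h : Commutes f α) (i : ℕ) :
    ∀ x, α ((f^i) x) = (f^i) (α x) := by
  induction i with
  | zero => intro x; simp
  | succ n ih =>
      intro x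
      rw [pow_succ', Module.End.mul_apply, Module.End.mul_apply, h, ih]

theorem pow_apply_comm (f : V →ₗ[ZMod 2] V) (k i : ℕ) (x : V) :
    (f^k) ((f^i) x) = (f^i) ((f^k) x) := by
  calc (f^k) ((f^i) x) = (f^(k+i)) x := by rw [pow_add, Module.End.mul_apply]
    _ = (f^(i+k)) x := by rw [Nat.add_comm]
    _ = (f^i) ((f^k) x) := by rw [pow_add, Module.End.mul_apply]

theorem pow_zero_on_cyc (f : V →ₗ[ZMod 2] V) (x : V) (k : ℕ) (hx : (f^k) x = 0) :
    ∀ y ∈ cyc f x, (f^k) y = 0 := by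
  intro y hy
  induction hy using Submodule.span_induction with
  | mem y hy => obtain ⟨i, rfl⟩ := hy; rw [pow_apply_comm, hx, map_zero]
  | zero => simp
  | add a b _ _ ha hb => rw [map_add, ha, hb, add_zero]
  | smul c a _ ha => rw [map_smul, ha, smul_zero]

theorem pow_mem_cyc (f : V →ₗ[ZMod 2] V) (x : V) (i : ℕ) : (f^i) x ∈ cyc f x :=
  subset_span ⟨i, rfl⟩

theorem mem_cyc_self (f : V →ₗ[ZMod 2] V) (x : V) : x ∈ cyc f x := by
  simpa using pow_mem_cyc f x 0

theorem cyc_f_stable (f : V →ₗ[ZMod 2] V) (x : V) : ∀ y ∈ cyc f x, f y ∈ cyc f x := by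
  intro y hy
  induction hy using Submodule.span_induction with
  | mem y hy => obtain ⟨i, rfl⟩ := hy; exact subset_span ⟨i+1, by simp [pow_succ']⟩
  | zero => simp
  | add a b _ _ ha hb => rw [map_add]; exact add_mem ha hb
  | smul c a _ ha => rw [map_smul]; exact smul_mem _ _ ha

theorem cyc_pow_stable (f : V →ₗ[ZMod 2] V) (x : V) (i : ℕ) :
    ∀ y ∈ cyc f x, (f^i) y ∈ cyc f x := by
  induction i with
  | zero => intro y hy; simpa using hy
  | succ n ih =>
      intro y hy
      rw [pow_succ, Module.End.mul_apply]
      exact ih _ (cyc_f_stable f x y hy)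

theorem cyc_le_cyc (f : V →ₗ[ZMod 2] V) (x : V) (k : ℕ) : cyc f ((f^k) x) ≤ cyc f x := by
  refine span_le.2 ?_
  rintro y ⟨i, rfl⟩
  exact subset_span ⟨i + k, by simp only []; rw [pow_add, Module.End.mul_apply]⟩

theorem cyc_mono_pow (f : V →ₗ[ZMod 2] V) (x : V) {k l : ℕ} (h : k ≤ l) :
    cyc f ((f^l) x) ≤ cyc f ((f^k) x) := by
  obtain ⟨m, rfl⟩ := Nat.exists_eq_add_of_le h
  have : (f^(k+m)) x = (f^m) ((f^k) x) := by rw [add_comm, pow_add]; rfl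
  rw [this]
  exact cyc_le_cyc f ((f^k) x) m

theorem cyc_zero (f : V →ₗ[ZMod 2] V) : cyc f (0 : V) = ⊥ := by
  refine le_antisymm (span_le.2 ?_) bot_le
  rintro y ⟨i, rfl⟩
  simp

theorem map_pow_cyc (f : V →ₗ[ZMod 2] V) (x : V) (k : ℕ) :
    ∀ y ∈ cyc f x, (f^k) y ∈ cyc f ((f^k) x) := by
  intro y hy
  induction hy using Submodule.span_induction with
  | mem y hy =>
      obtain ⟨i, rfl⟩ := hy
      rw [pow_apply_comm]; exact subset_span ⟨i, rfl⟩
  | zero => simp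
  | add a b _ _ ha hb => rw [map_add]; exact add_mem ha hb
  | smul c a _ ha => rw [map_smul]; exact smul_mem _ _ ha

/-- Bundle of the standing hypotheses. -/
structure Setup (V : Type*) [AddCommGroup V] [Module (ZMod 2) V] where
  f : V →ₗ[ZMod 2] V
  u : V
  v : V
  R : ℕ
  S : ℕ
  hf : IsNilpotent f
  hcompl : IsCompl (cyc f u) (cyc f v)
  heu : expnt f u = R
  hev : expnt f v = S
  hRS : R + 1 < S

namespace Setup

variable (C : Setup V)

theorem exp_spec (x : V) : ((C.f ^ (expnt C.f x)) x = 0) ∧ ∀ i < expnt C.f x, (C.f^i) x ≠ 0 := by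
  obtain ⟨n, hn⟩ := C.hf
  have hne : ((expnt C.f x)) ∈ {ℓ : ℕ | (C.f ^ ℓ) x = 0} :=
    Nat.sInf_mem ⟨n, by simp [Set.mem_setOf_eq, hn]⟩
  exact ⟨hne, fun i hi => Nat.notMem_of_lt_sInf hi⟩

theorem fR_u : (C.f ^ C.R) C.u = 0 := by
  have := (C.exp_spec C.u).1; rwa [C.heu] at this

theorem fi_u_ne (i : ℕ) (hi : i < C.R) : (C.f^i) C.u ≠ 0 := by
  have h := (C.exp_spec C.u).2
  rw [C.heu] at h
  exact h i hi

theorem fS_v : (C.f ^ C.S) C.v = 0 := by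
  have := (C.exp_spec C.v).1; rwa [C.hev] at this

theorem fj_v_ne (j : ℕ) (hj : j < C.S) : (C.f^j) C.v ≠ 0 := by
  have h := (C.exp_spec C.v).2
  rw [C.hev] at h
  exact h j hj

theorem fpow_u_zero (k : ℕ) (hk : C.R ≤ k) : (C.f^k) C.u = 0 := by
  obtain ⟨m, rfl⟩ := Nat.exists_eq_add_of_le hk
  rw [add_comm, pow_add, Module.End.mul_apply, C.fR_u, map_zero]

theorem fpow_v_zero (k : ℕ) (hk : C.S ≤ k) : (C.f^k) C.v = 0 := by
  obtain ⟨m, rfl⟩ := Nat.exists_eq_add_of_le hk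
  rw [add_comm, pow_add, Module.End.mul_apply, C.fS_v, map_zero]

theorem RltS : C.R < C.S := by have := C.hRS; omega

theorem fS_zero (x : V) : (C.f ^ C.S) x = 0 := by
  have hx : x ∈ (⊤ : Submodule (ZMod 2) V) := trivial
  rw [← C.hcompl.sup_eq_top] at hx
  obtain ⟨p, hp, q, hq, rfl⟩ := Submodule.mem_sup.1 hx
  have h1 := pow_zero_on_cyc C.f C.u C.S (C.fpow_u_zero C.S C.RltS.le) p hp
  have h2 := pow_zero_on_cyc C.f C.v C.S C.fS_v q hq
  rw [map_add, h1, h2, add_zero]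

/-- Linear independence of the chain `f^i u`, `i < R`. -/
theorem chain_li_u : LinearIndependent (ZMod 2) (fun i : Fin C.R => (C.f^(i:ℕ)) C.u) := by
  rw [Fintype.linearIndependent_iff]
  intro g hsum
  have key : ∀ n : ℕ, ∀ i : Fin C.R, (i:ℕ) = n → g i = 0 := by
    intro n
    induction n using Nat.strong_induction_on with
    | _ n ih =>
      rintro i rfl
      have h0 : (C.f ^ (C.R - 1 - (i:ℕ))) (∑ j : Fin C.R, g j • (C.f^(j:ℕ)) C.u) = 0 := by
        rw [hsum, map_zero]
      rw [map_sum] at h0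
      have hsingle : ∀ j : Fin C.R, j ∈ Finset.univ → j ≠ i →
          (C.f ^ (C.R - 1 - (i:ℕ))) (g j • (C.f^(j:ℕ)) C.u) = 0 := by
        intro j _ hj
        rcases lt_or_gt_of_ne (fun h => hj (Fin.ext h) : (j:ℕ) ≠ (i:ℕ)) with h | h
        · rw [ih (j:ℕ) h j rfl, zero_smul, map_zero]
        · rw [map_smul, ← Module.End.mul_apply, ← pow_add]
          rw [C.fpow_u_zero _ (by omega), smul_zero]
      rw [Finset.sum_eq_single_of_mem i (Finset.mem_univ i) hsingle] at h0
      rw [map_smul, ← Module.End.mul_apply, ← pow_add] at h0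
      have hre : C.R - 1 - (i:ℕ) + (i:ℕ) = C.R - 1 := by omega
      rw [hre] at h0
      exact (smul_eq_zero.1 h0).resolve_right (C.fi_u_ne (C.R - 1) (by omega))
  exact fun i => key (i:ℕ) i rfl

theorem chain_li_v : LinearIndependent (ZMod 2) (fun j : Fin C.S => (C.f^(j:ℕ)) C.v) := by
  rw [Fintype.linearIndependent_iff]
  intro g hsum
  have key : ∀ n : ℕ, ∀ i : Fin C.S, (i:ℕ) = n → g i = 0 := by
    intro n
    induction n using Nat.strong_induction_on with
    | _ n ih =>
      rintro i rfl
      have h0 : (C.f ^ (C.S - 1 - (i:ℕ))) (∑ j : Fin C.S, g j • (C.f^(j:ℕ)) C.v) = 0 := by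
        rw [hsum, map_zero]
      rw [map_sum] at h0
      have hsingle : ∀ j : Fin C.S, j ∈ Finset.univ → j ≠ i →
          (C.f ^ (C.S - 1 - (i:ℕ))) (g j • (C.f^(j:ℕ)) C.v) = 0 := by
        intro j _ hj
        rcases lt_or_gt_of_ne (fun h => hj (Fin.ext h) : (j:ℕ) ≠ (i:ℕ)) with h | h
        · rw [ih (j:ℕ) h j rfl, zero_smul, map_zero]
        · rw [map_smul, ← Module.End.mul_apply, ← pow_add]
          rw [C.fpow_v_zero _ (by omega), smul_zero]
      rw [Finset.sum_eq_single_of_mem i (Finset.mem_univ i) hsingle] at h0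
      rw [map_smul, ← Module.End.mul_apply, ← pow_add] at h0
      have hre : C.S - 1 - (i:ℕ) + (i:ℕ) = C.S - 1 := by omega
      rw [hre] at h0
      exact (smul_eq_zero.1 h0).resolve_right (C.fj_v_ne (C.S - 1) (by omega))
  exact fun i => key (i:ℕ) i rfl

/-- The global basis family. -/
noncomputable def B : Basis (Fin C.R ⊕ Fin C.S) (ZMod 2) V := by
  refine Basis.mk (v := Sum.elim (fun i : Fin C.R => (C.f^(i:ℕ)) C.u)
      (fun j : Fin C.S => (C.f^(j:ℕ)) C.v)) ?_ ?_
  · refine LinearIndependent.sum_type C.chain_li_u C.chain_li_v ?_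
    refine Disjoint.mono ?_ ?_ C.hcompl.disjoint
    · refine span_le.2 ?_
      rintro y ⟨i, rfl⟩
      exact pow_mem_cyc C.f C.u (i:ℕ)
    · refine span_le.2 ?_
      rintro y ⟨j, rfl⟩
      exact pow_mem_cyc C.f C.v (j:ℕ)
  · rw [top_le_iff, eq_top_iff, ← C.hcompl.sup_eq_top]
    refine sup_le ?_ ?_
    · refine span_le.2 ?_
      rintro y ⟨i, rfl⟩
      by_cases hi : i < C.R
      · exact subset_span ⟨Sum.inl ⟨i, hi⟩, rfl⟩
      · simp only []
        rw [C.fpow_u_zero i (by omega)]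
        exact zero_mem _
    · refine span_le.2 ?_
      rintro y ⟨j, rfl⟩
      by_cases hj : j < C.S
      · exact subset_span ⟨Sum.inr ⟨j, hj⟩, rfl⟩
      · simp only []
        rw [C.fpow_v_zero j (by omega)]
        exact zero_mem _

theorem B_inl (i : Fin C.R) : C.B (Sum.inl i) = (C.f^(i:ℕ)) C.u := by
  rw [B, Basis.mk_apply]; rfl

theorem B_inr (j : Fin C.S) : C.B (Sum.inr j) = (C.f^(j:ℕ)) C.v := by
  rw [B, Basis.mk_apply]; rfl

/-- `U_a = ⟨f^a u⟩`. -/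
noncomputable def Ua (a : ℕ) : Submodule (ZMod 2) V := cyc C.f ((C.f^a) C.u)

/-- `W_b = ⟨f^b v⟩`. -/
noncomputable def Wb (b : ℕ) : Submodule (ZMod 2) V := cyc C.f ((C.f^b) C.v)

/-- Index sets. -/
def SU (a : ℕ) : Set (Fin C.R ⊕ Fin C.S) := {p | ∃ i : Fin C.R, p = Sum.inl i ∧ a ≤ (i:ℕ)}

def SW (b : ℕ) : Set (Fin C.R ⊕ Fin C.S) := {p | ∃ j : Fin C.S, p = Sum.inr j ∧ b ≤ (j:ℕ)}

theorem Ua_eq_span (a : ℕ) : C.Ua a = span (ZMod 2) (C.B '' C.SU a) := by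
  apply le_antisymm
  · refine span_le.2 ?_
    rintro y ⟨i, rfl⟩
    simp only []
    rw [← Module.End.mul_apply, ← pow_add]
    by_cases hi : i + a < C.R
    · refine subset_span ⟨Sum.inl ⟨i + a, hi⟩, ⟨⟨⟨i+a, hi⟩, rfl, by simp⟩, ?_⟩⟩
      rw [C.B_inl]
    · rw [C.fpow_u_zero _ (by omega)]
      exact zero_mem _
  · refine span_le.2 ?_
    rintro y ⟨p, ⟨i, rfl, hi⟩, rfl⟩
    rw [C.B_inl]
    obtain ⟨m, hm⟩ := Nat.exists_eq_add_of_le hi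
    have : (C.f^(i:ℕ)) C.u = (C.f^m) ((C.f^a) C.u) := by
      rw [← Module.End.mul_apply, ← pow_add, hm, Nat.add_comm]
    rw [this]
    exact pow_mem_cyc _ _ _

theorem Wb_eq_span (b : ℕ) : C.Wb b = span (ZMod 2) (C.B '' C.SW b) := by
  apply le_antisymm
  · refine span_le.2 ?_
    rintro y ⟨j, rfl⟩
    simp only []
    rw [← Module.End.mul_apply, ← pow_add]
    by_cases hj : j + b < C.S
    · refine subset_span ⟨Sum.inr ⟨j + b, hj⟩, ⟨⟨⟨j+b, hj⟩, rfl, by simp⟩, ?_⟩⟩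
      rw [C.B_inr]
    · rw [C.fpow_v_zero _ (by omega)]
      exact zero_mem _
  · refine span_le.2 ?_
    rintro y ⟨p, ⟨j, rfl, hj⟩, rfl⟩
    rw [C.B_inr]
    obtain ⟨m, hm⟩ := Nat.exists_eq_add_of_le hj
    have : (C.f^(j:ℕ)) C.v = (C.f^m) ((C.f^b) C.v) := by
      rw [← Module.End.mul_apply, ← pow_add, hm, Nat.add_comm]
    rw [this]
    exact pow_mem_cyc _ _ _

theorem mem_UW_iff {a b : ℕ} {x : V} :
    x ∈ C.Ua a ⊔ C.Wb b ↔ ∀ p ∈ (C.B.repr x).support, p ∈ C.SU a ∪ C.SW b := by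
  rw [C.Ua_eq_span, C.Wb_eq_span, ← Submodule.span_union, ← Set.image_union,
    Basis.mem_span_image]
  constructor
  · intro h p hp; exact h hp
  · intro h p hp; exact h p hp

theorem mem_Ua_iff {a : ℕ} {x : V} :
    x ∈ C.Ua a ↔ ∀ p ∈ (C.B.repr x).support, p ∈ C.SU a := by
  rw [C.Ua_eq_span, Basis.mem_span_image]
  constructor
  · intro h p hp; exact h hp
  · intro h p hp; exact h p hp

theorem mem_Wb_iff {b : ℕ} {x : V} :
    x ∈ C.Wb b ↔ ∀ p ∈ (C.B.repr x).support, p ∈ C.SW b := by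
  rw [C.Wb_eq_span, Basis.mem_span_image]
  constructor
  · intro h p hp; exact h hp
  · intro h p hp; exact h p hp

theorem repr_fu (i : Fin C.R) :
    C.B.repr ((C.f^(i:ℕ)) C.u) = Finsupp.single (Sum.inl i) 1 := by
  rw [← C.B_inl, C.B.repr_self]

theorem repr_fv (j : Fin C.S) :
    C.B.repr ((C.f^(j:ℕ)) C.v) = Finsupp.single (Sum.inr j) 1 := by
  rw [← C.B_inr, C.B.repr_self]

theorem top_eq : (⊤ : Submodule (ZMod 2) V) = C.Ua 0 ⊔ C.Wb 0 := by
  have h1 : C.Ua 0 = cyc C.f C.u := by rw [Ua]; norm_num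
  have h2 : C.Wb 0 = cyc C.f C.v := by rw [Wb]; norm_num
  rw [h1, h2, C.hcompl.sup_eq_top]

end Setup
theorem cyc_induct {f : V →ₗ[ZMod 2] V} {x : V} {M : Submodule (ZMod 2) V}
    (g : V →ₗ[ZMod 2] V) (h : ∀ i : ℕ, g ((f^i) x) ∈ M) : ∀ y ∈ cyc f x, g y ∈ M := by
  intro y hy
  induction hy using Submodule.span_induction with
  | mem y hy => obtain ⟨i, rfl⟩ := hy; exact h i
  | zero => simp
  | add a b _ _ ha hb => rw [map_add]; exact add_mem ha hb
  | smul c a _ ha => rw [map_smul]; exact smul_mem _ _ ha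

namespace Setup

variable {V : Type*} [AddCommGroup V] [Module (ZMod 2) V] (C : Setup V)

theorem Ua_mono {a a' : ℕ} (h : a ≤ a') : C.Ua a' ≤ C.Ua a := cyc_mono_pow C.f C.u h

theorem Wb_mono {b b' : ℕ} (h : b ≤ b') : C.Wb b' ≤ C.Wb b := cyc_mono_pow C.f C.v h

theorem Ua_bot {a : ℕ} (h : C.R ≤ a) : C.Ua a = ⊥ := by
  rw [Ua, C.fpow_u_zero a h, cyc_zero]

theorem Wb_bot {b : ℕ} (h : C.S ≤ b) : C.Wb b = ⊥ := by
  rw [Wb, C.fpow_v_zero b h, cyc_zero]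

theorem UW_mono {a a' b b' : ℕ} (ha : a ≤ a') (hb : b ≤ b') :
    C.Ua a' ⊔ C.Wb b' ≤ C.Ua a ⊔ C.Wb b :=
  sup_le_sup (C.Ua_mono ha) (C.Wb_mono hb)

theorem fu_mem_Ua (a : ℕ) : (C.f^a) C.u ∈ C.Ua a := mem_cyc_self _ _

theorem fv_mem_Wb (b : ℕ) : (C.f^b) C.v ∈ C.Wb b := mem_cyc_self _ _

theorem fu_mem_Ua' {a k : ℕ} (h : a ≤ k) : (C.f^k) C.u ∈ C.Ua a := by
  obtain ⟨m, rfl⟩ := Nat.exists_eq_add_of_le h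
  have : (C.f^(a+m)) C.u = (C.f^m) ((C.f^a) C.u) := by
    rw [← Module.End.mul_apply, ← pow_add, Nat.add_comm]
  rw [this]; exact pow_mem_cyc _ _ _

theorem fv_mem_Wb' {b k : ℕ} (h : b ≤ k) : (C.f^k) C.v ∈ C.Wb b := by
  obtain ⟨m, rfl⟩ := Nat.exists_eq_add_of_le h
  have : (C.f^(b+m)) C.v = (C.f^m) ((C.f^b) C.v) := by
    rw [← Module.End.mul_apply, ← pow_add, Nat.add_comm]
  rw [this]; exact pow_mem_cyc _ _ _

theorem UW_f_stable (a b : ℕ) : ∀ y ∈ C.Ua a ⊔ C.Wb b, C.f y ∈ C.Ua a ⊔ C.Wb b := by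
  intro y hy
  obtain ⟨p, hp, q, hq, rfl⟩ := Submodule.mem_sup.1 hy
  rw [map_add]
  exact add_mem (Submodule.mem_sup_left (cyc_f_stable _ _ _ hp))
    (Submodule.mem_sup_right (cyc_f_stable _ _ _ hq))

theorem pow_mem_UW {a b k : ℕ} {z : V} (hz : z ∈ C.Ua a ⊔ C.Wb b) :
    (C.f^k) z ∈ C.Ua (a+k) ⊔ C.Wb (b+k) := by
  obtain ⟨p, hp, q, hq, rfl⟩ := Submodule.mem_sup.1 hz
  rw [map_add]
  refine add_mem (Submodule.mem_sup_left ?_) (Submodule.mem_sup_right ?_)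
  · have h1 : (C.f^k) ((C.f^a) C.u) = (C.f^(a+k)) C.u := by
      rw [← Module.End.mul_apply, ← pow_add, Nat.add_comm]
    have := map_pow_cyc C.f ((C.f^a) C.u) k p hp
    rwa [Ua, ← h1]
  · have h1 : (C.f^k) ((C.f^b) C.v) = (C.f^(b+k)) C.v := by
      rw [← Module.End.mul_apply, ← pow_add, Nat.add_comm]
    have := map_pow_cyc C.f ((C.f^b) C.v) k q hq
    rwa [Wb, ← h1]

/-- Construct an endomorphism from prescribed images of `u` and `v`. -/
noncomputable def mkEnd (tu tv : V) : V →ₗ[ZMod 2] V :=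
  C.B.constr (ZMod 2) (Sum.elim (fun i : Fin C.R => (C.f^(i:ℕ)) tu)
    (fun j : Fin C.S => (C.f^(j:ℕ)) tv))

theorem mkEnd_inl (tu tv : V) (i : Fin C.R) :
    C.mkEnd tu tv ((C.f^(i:ℕ)) C.u) = (C.f^(i:ℕ)) tu := by
  rw [← C.B_inl]
  exact C.B.constr_basis _ _ (Sum.inl i)

theorem mkEnd_inr (tu tv : V) (j : Fin C.S) :
    C.mkEnd tu tv ((C.f^(j:ℕ)) C.v) = (C.f^(j:ℕ)) tv := by
  rw [← C.B_inr]
  exact C.B.constr_basis _ _ (Sum.inr j)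

theorem mkEnd_commutes (tu tv : V) (htu : (C.f^C.R) tu = 0) (htv : (C.f^C.S) tv = 0) :
    ∀ x, C.mkEnd tu tv (C.f x) = C.f (C.mkEnd tu tv x) := by
  have : (C.mkEnd tu tv).comp C.f = C.f.comp (C.mkEnd tu tv) := by
    refine C.B.ext fun p => ?_
    rcases p with i | j
    · rw [LinearMap.comp_apply, LinearMap.comp_apply, C.B_inl]
      have h1 : C.f ((C.f^(i:ℕ)) C.u) = (C.f^((i:ℕ)+1)) C.u := by
        rw [pow_succ', Module.End.mul_apply]
      rw [h1, C.mkEnd_inl tu tv i]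
      have h2 : C.f ((C.f^(i:ℕ)) tu) = (C.f^((i:ℕ)+1)) tu := by
        rw [pow_succ', Module.End.mul_apply]
      rw [h2]
      by_cases hi : (i:ℕ)+1 < C.R
      · exact C.mkEnd_inl tu tv ⟨(i:ℕ)+1, hi⟩
      · have hR : (i:ℕ)+1 = C.R := by omega
        have hz : (C.f^((i:ℕ)+1)) C.u = 0 := C.fpow_u_zero _ (by omega)
        have hz' : (C.f^((i:ℕ)+1)) tu = 0 := by rw [hR]; exact htu
        rw [hz, hz', map_zero]
    · rw [LinearMap.comp_apply, LinearMap.comp_apply, C.B_inr]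
      have h1 : C.f ((C.f^(j:ℕ)) C.v) = (C.f^((j:ℕ)+1)) C.v := by
        rw [pow_succ', Module.End.mul_apply]
      rw [h1, C.mkEnd_inr tu tv j]
      have h2 : C.f ((C.f^(j:ℕ)) tv) = (C.f^((j:ℕ)+1)) tv := by
        rw [pow_succ', Module.End.mul_apply]
      rw [h2]
      by_cases hj : (j:ℕ)+1 < C.S
      · exact C.mkEnd_inr tu tv ⟨(j:ℕ)+1, hj⟩
      · have hS : (j:ℕ)+1 = C.S := by omega
        have hz : (C.f^((j:ℕ)+1)) C.v = 0 := C.fpow_v_zero _ (by omega)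
        have hz' : (C.f^((j:ℕ)+1)) tv = 0 := by rw [hS]; exact htv
        rw [hz, hz', map_zero]
  intro x
  exact LinearMap.ext_iff.1 this x

theorem mkEnd_pow_commutes (tu tv : V) (htu : (C.f^C.R) tu = 0) (htv : (C.f^C.S) tv = 0)
    (k : ℕ) : ∀ x, C.mkEnd tu tv ((C.f^k) x) = (C.f^k) (C.mkEnd tu tv x) := by
  induction k with
  | zero => intro x; simp
  | succ n ih =>
      intro x
      rw [pow_succ', Module.End.mul_apply, Module.End.mul_apply,
        C.mkEnd_commutes tu tv htu htv, ih]

theorem mkEnd_fu (tu tv : V) (htu : (C.f^C.R) tu = 0) (htv : (C.f^C.S) tv = 0) (k : ℕ) :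
    C.mkEnd tu tv ((C.f^k) C.u) = (C.f^k) tu := by
  by_cases hk : k < C.R
  · exact C.mkEnd_inl tu tv ⟨k, hk⟩
  · rw [C.fpow_u_zero k (by omega), map_zero]
    obtain ⟨m, rfl⟩ := Nat.exists_eq_add_of_le (show C.R ≤ k by omega)
    rw [add_comm, pow_add, Module.End.mul_apply, htu, map_zero]

theorem mkEnd_fv (tu tv : V) (htu : (C.f^C.R) tu = 0) (htv : (C.f^C.S) tv = 0) (k : ℕ) :
    C.mkEnd tu tv ((C.f^k) C.v) = (C.f^k) tv := by
  by_cases hk : k < C.S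
  · exact C.mkEnd_inr tu tv ⟨k, hk⟩
  · rw [C.fpow_v_zero k (by omega), map_zero]
    obtain ⟨m, rfl⟩ := Nat.exists_eq_add_of_le (show C.S ≤ k by omega)
    rw [add_comm, pow_add, Module.End.mul_apply, htv, map_zero]

theorem mkEnd_u (tu tv : V) (htu : (C.f^C.R) tu = 0) (htv : (C.f^C.S) tv = 0) :
    C.mkEnd tu tv C.u = tu := by
  have := C.mkEnd_fu tu tv htu htv 0
  simpa using this

theorem mkEnd_v (tu tv : V) (htu : (C.f^C.R) tu = 0) (htv : (C.f^C.S) tv = 0) :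
    C.mkEnd tu tv C.v = tv := by
  have := C.mkEnd_fv tu tv htu htv 0
  simpa using this

end Setup
namespace Setup

variable {V : Type*} [AddCommGroup V] [Module (ZMod 2) V] (C : Setup V)

theorem UW_pow_zero {a b : ℕ} {z : V} (hz : z ∈ C.Ua a ⊔ C.Wb b) (k : ℕ)
    (hk1 : C.R ≤ a + k) (hk2 : C.S ≤ b + k) : (C.f^k) z = 0 := by
  have h := C.pow_mem_UW (k := k) hz
  rw [C.Ua_bot hk1, C.Wb_bot hk2] at h
  simpa using h

theorem mkEnd_add (tu tv tu' tv' : V) :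
    C.mkEnd (tu + tu') (tv + tv') = C.mkEnd tu tv + C.mkEnd tu' tv' := by
  refine C.B.ext fun p => ?_
  rcases p with i | j
  · rw [C.B_inl, C.mkEnd_inl, LinearMap.add_apply, C.mkEnd_inl, C.mkEnd_inl, map_add]
  · rw [C.B_inr, C.mkEnd_inr, LinearMap.add_apply, C.mkEnd_inr, C.mkEnd_inr, map_add]

theorem mkEnd_id : C.mkEnd C.u C.v = LinearMap.id := by
  refine C.B.ext fun p => ?_
  rcases p with i | j
  · rw [C.B_inl, C.mkEnd_inl, LinearMap.id_apply]
  · rw [C.B_inr, C.mkEnd_inr, LinearMap.id_apply]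

section Auto

variable {z₁ z₂ : V}

theorem z1_fR (hz₁ : z₁ ∈ C.Ua 1 ⊔ C.Wb (C.S - C.R)) : (C.f^C.R) z₁ = 0 :=
  C.UW_pow_zero hz₁ C.R (by omega) (by have := C.RltS; omega)

theorem z2_fS (hz₂ : z₂ ∈ C.Ua 0 ⊔ C.Wb 1) : (C.f^C.S) z₂ = 0 :=
  C.UW_pow_zero hz₂ C.S (by have := C.RltS; omega) (by omega)

theorem tu_fR (hz₁ : z₁ ∈ C.Ua 1 ⊔ C.Wb (C.S - C.R)) : (C.f^C.R) (C.u + z₁) = 0 := by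
  rw [map_add, C.fR_u, C.z1_fR hz₁, add_zero]

theorem tv_fS (hz₂ : z₂ ∈ C.Ua 0 ⊔ C.Wb 1) : (C.f^C.S) (C.v + z₂) = 0 := by
  rw [map_add, C.fS_v, C.z2_fS hz₂, add_zero]

theorem N_step (hz₁ : z₁ ∈ C.Ua 1 ⊔ C.Wb (C.S - C.R)) (hz₂ : z₂ ∈ C.Ua 0 ⊔ C.Wb 1) (a b : ℕ) : ∀ x ∈ C.Ua a ⊔ C.Wb b,
    C.mkEnd z₁ z₂ x ∈ C.Ua (min (a+1) b) ⊔ C.Wb (min (C.S - C.R + a) (b+1)) := by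
  intro x hx
  obtain ⟨p, hp, q, hq, rfl⟩ := Submodule.mem_sup.1 hx
  rw [map_add]
  refine add_mem ?_ ?_
  · refine cyc_induct (C.mkEnd z₁ z₂) (fun i => ?_) p hp
    have h1 : (C.f^i) ((C.f^a) C.u) = (C.f^(a+i)) C.u := by
      rw [← Module.End.mul_apply, ← pow_add, Nat.add_comm]
    rw [h1, C.mkEnd_fu z₁ z₂ (C.z1_fR hz₁) (C.z2_fS hz₂)]
    refine C.UW_mono (by omega) (by omega) (C.pow_mem_UW (k := a+i) hz₁)
  · refine cyc_induct (C.mkEnd z₁ z₂) (fun j => ?_) q hq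
    have h1 : (C.f^j) ((C.f^b) C.v) = (C.f^(b+j)) C.v := by
      rw [← Module.End.mul_apply, ← pow_add, Nat.add_comm]
    rw [h1, C.mkEnd_fv z₁ z₂ (C.z1_fR hz₁) (C.z2_fS hz₂)]
    refine C.UW_mono (by omega) (by omega) (C.pow_mem_UW (k := b+j) hz₂)

theorem N_nilpotent (hz₁ : z₁ ∈ C.Ua 1 ⊔ C.Wb (C.S - C.R)) (hz₂ : z₂ ∈ C.Ua 0 ⊔ C.Wb 1) : (C.mkEnd z₁ z₂)^(C.S+1) = 0 := by
  have key : ∀ k : ℕ, ∀ x : V, ((C.mkEnd z₁ z₂)^(k+1)) x ∈ C.Ua k ⊔ C.Wb (k+1) := by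
    intro k
    induction k with
    | zero =>
        intro x
        have hx : x ∈ C.Ua 0 ⊔ C.Wb 0 := by rw [← C.top_eq]; trivial
        have h := C.N_step hz₁ hz₂ 0 0 x hx
        have e1 : min (0+1) 0 = 0 := by omega
        have e2 : min (C.S - C.R + 0) (0+1) = 1 := by have := C.hRS; omega
        rw [e1, e2] at h
        simpa using h
    | succ n ih =>
        intro x
        have h0 : ((C.mkEnd z₁ z₂)^(n+1+1)) x
            = C.mkEnd z₁ z₂ (((C.mkEnd z₁ z₂)^(n+1)) x) := by
          rw [pow_succ', Module.End.mul_apply]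
        rw [h0]
        have h := C.N_step hz₁ hz₂ n (n+1) _ (ih x)
        have e1 : min (n+1) (n+1) = n+1 := by omega
        have e2 : min (C.S - C.R + n) (n+1+1) = n+2 := by have := C.hRS; omega
        rwa [e1, e2] at h
  refine LinearMap.ext fun x => ?_
  have h := key C.S x
  rw [C.Ua_bot (C.RltS.le), C.Wb_bot (by omega)] at h
  simpa using h

theorem mkEnd_isUnit (hz₁ : z₁ ∈ C.Ua 1 ⊔ C.Wb (C.S - C.R)) (hz₂ : z₂ ∈ C.Ua 0 ⊔ C.Wb 1) : IsUnit (C.mkEnd (C.u + z₁) (C.v + z₂)) := by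
  have h : C.mkEnd (C.u + z₁) (C.v + z₂) = 1 + C.mkEnd z₁ z₂ := by
    rw [C.mkEnd_add]
    congr 1
    exact C.mkEnd_id
  rw [h]
  exact IsNilpotent.isUnit_one_add ⟨C.S+1, C.N_nilpotent hz₁ hz₂⟩

/-- Automorphism `u ↦ u + z₁`, `v ↦ v + z₂`. -/
noncomputable def mkAuto (hz₁ : z₁ ∈ C.Ua 1 ⊔ C.Wb (C.S - C.R)) (hz₂ : z₂ ∈ C.Ua 0 ⊔ C.Wb 1) : V ≃ₗ[ZMod 2] V :=
  LinearEquiv.ofBijective (C.mkEnd (C.u + z₁) (C.v + z₂))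
    ((Module.End.isUnit_iff _).1 (C.mkEnd_isUnit hz₁ hz₂))

theorem mkAuto_apply (hz₁ : z₁ ∈ C.Ua 1 ⊔ C.Wb (C.S - C.R)) (hz₂ : z₂ ∈ C.Ua 0 ⊔ C.Wb 1) (x : V) : C.mkAuto hz₁ hz₂ x = C.mkEnd (C.u + z₁) (C.v + z₂) x := rfl

theorem mkAuto_commutes (hz₁ : z₁ ∈ C.Ua 1 ⊔ C.Wb (C.S - C.R)) (hz₂ : z₂ ∈ C.Ua 0 ⊔ C.Wb 1) : Commutes C.f (C.mkAuto hz₁ hz₂) := by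
  intro x
  exact C.mkEnd_commutes _ _ (C.tu_fR hz₁) (C.tv_fS hz₂) x

theorem mkAuto_fu (hz₁ : z₁ ∈ C.Ua 1 ⊔ C.Wb (C.S - C.R)) (hz₂ : z₂ ∈ C.Ua 0 ⊔ C.Wb 1) (k : ℕ) :
    C.mkAuto hz₁ hz₂ ((C.f^k) C.u) = (C.f^k) C.u + (C.f^k) z₁ := by
  rw [mkAuto_apply, C.mkEnd_fu _ _ (C.tu_fR hz₁) (C.tv_fS hz₂), map_add]

theorem mkAuto_fv (hz₁ : z₁ ∈ C.Ua 1 ⊔ C.Wb (C.S - C.R)) (hz₂ : z₂ ∈ C.Ua 0 ⊔ C.Wb 1) (k : ℕ) :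
    C.mkAuto hz₁ hz₂ ((C.f^k) C.v) = (C.f^k) C.v + (C.f^k) z₂ := by
  rw [mkAuto_apply, C.mkEnd_fv _ _ (C.tu_fR hz₁) (C.tv_fS hz₂), map_add]

end Auto

end Setup
namespace Setup

variable {V : Type*} [AddCommGroup V] [Module (ZMod 2) V] (C : Setup V)

theorem add_self (x : V) : x + x = 0 := by
  have h : (2 : ZMod 2) • x = 0 := by
    have : (2 : ZMod 2) = 0 := by decide
    rw [this, zero_smul]
  rwa [two_smul] at h

theorem neg_self (x : V) : -x = x := by
  rw [neg_eq_iff_add_eq_zero, add_self]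

theorem sub_eq_add' (x y : V) : x - y = x + y := by
  rw [sub_eq_add_neg, neg_self]

theorem coord_shift_u (k : ℕ) (i : Fin C.R) (h : (i:ℕ)+k < C.R) (x : V) :
    C.B.repr ((C.f^k) x) (Sum.inl ⟨(i:ℕ)+k, h⟩) = C.B.repr x (Sum.inl i) := by
  have hmap : (C.B.coord (Sum.inl ⟨(i:ℕ)+k, h⟩)).comp ((C.f^k) : V →ₗ[ZMod 2] V)
      = C.B.coord (Sum.inl i) := by
    refine C.B.ext fun p => ?_
    rcases p with i' | j'
    · rw [LinearMap.comp_apply, C.B_inl, Basis.coord_apply, Basis.coord_apply]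
      have h1 : (C.f^k) ((C.f^(i':ℕ)) C.u) = (C.f^((i':ℕ)+k)) C.u := by
        rw [← Module.End.mul_apply, ← pow_add, Nat.add_comm]
      rw [h1]
      by_cases hii : i' = i
      · subst hii
        rw [C.repr_fu ⟨(i':ℕ)+k, h⟩, C.repr_fu i', Finsupp.single_eq_same,
          Finsupp.single_eq_same]
      · have hne : (i':ℕ) ≠ (i:ℕ) := fun hc => hii (Fin.ext hc)
        by_cases hik : (i':ℕ)+k < C.R
        · rw [C.repr_fu ⟨(i':ℕ)+k, hik⟩, C.repr_fu i']
          rw [Finsupp.single_eq_of_ne', Finsupp.single_eq_of_ne']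
          · intro hc; exact hii (by injection hc)
          · intro hc
            have : ((i':ℕ)+k : ℕ) = (i:ℕ)+k := by
              have := (Sum.inl.inj hc); exact congrArg Fin.val this
            omega
        · rw [C.fpow_u_zero _ (by omega), map_zero, C.repr_fu i']
          rw [Finsupp.zero_apply, Finsupp.single_eq_of_ne']
          intro hc; exact hii (by injection hc)
    · rw [LinearMap.comp_apply, C.B_inr, Basis.coord_apply, Basis.coord_apply]
      have h1 : (C.f^k) ((C.f^(j':ℕ)) C.v) = (C.f^((j':ℕ)+k)) C.v := by
        rw [← Module.End.mul_apply, ← pow_add, Nat.add_comm]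
      rw [h1, C.repr_fv j', Finsupp.single_eq_of_ne (by simp)]
      by_cases hjk : (j':ℕ)+k < C.S
      · rw [C.repr_fv ⟨(j':ℕ)+k, hjk⟩, Finsupp.single_eq_of_ne (by simp)]
      · rw [C.fpow_v_zero _ (by omega), map_zero, Finsupp.zero_apply]
  have := LinearMap.ext_iff.1 hmap x
  rw [LinearMap.comp_apply, Basis.coord_apply, Basis.coord_apply] at this
  exact this

theorem coord_shift_v (k : ℕ) (j : Fin C.S) (h : (j:ℕ)+k < C.S) (x : V) :
    C.B.repr ((C.f^k) x) (Sum.inr ⟨(j:ℕ)+k, h⟩) = C.B.repr x (Sum.inr j) := by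
  have hmap : (C.B.coord (Sum.inr ⟨(j:ℕ)+k, h⟩)).comp ((C.f^k) : V →ₗ[ZMod 2] V)
      = C.B.coord (Sum.inr j) := by
    refine C.B.ext fun p => ?_
    rcases p with i' | j'
    · rw [LinearMap.comp_apply, C.B_inl, Basis.coord_apply, Basis.coord_apply]
      have h1 : (C.f^k) ((C.f^(i':ℕ)) C.u) = (C.f^((i':ℕ)+k)) C.u := by
        rw [← Module.End.mul_apply, ← pow_add, Nat.add_comm]
      rw [h1, C.repr_fu i', Finsupp.single_eq_of_ne (by simp)]
      by_cases hik : (i':ℕ)+k < C.R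
      · rw [C.repr_fu ⟨(i':ℕ)+k, hik⟩, Finsupp.single_eq_of_ne (by simp)]
      · rw [C.fpow_u_zero _ (by omega), map_zero, Finsupp.zero_apply]
    · rw [LinearMap.comp_apply, C.B_inr, Basis.coord_apply, Basis.coord_apply]
      have h1 : (C.f^k) ((C.f^(j':ℕ)) C.v) = (C.f^((j':ℕ)+k)) C.v := by
        rw [← Module.End.mul_apply, ← pow_add, Nat.add_comm]
      rw [h1]
      by_cases hjj : j' = j
      · subst hjj
        rw [C.repr_fv ⟨(j':ℕ)+k, h⟩, C.repr_fv j', Finsupp.single_eq_same,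
          Finsupp.single_eq_same]
      · by_cases hjk : (j':ℕ)+k < C.S
        · rw [C.repr_fv ⟨(j':ℕ)+k, hjk⟩, C.repr_fv j']
          rw [Finsupp.single_eq_of_ne', Finsupp.single_eq_of_ne']
          · intro hc; exact hjj (by injection hc)
          · intro hc
            have : ((j':ℕ)+k : ℕ) = (j:ℕ)+k := by
              have := (Sum.inr.inj hc); exact congrArg Fin.val this
            omega
        · rw [C.fpow_v_zero _ (by omega), map_zero, C.repr_fv j']
          rw [Finsupp.zero_apply, Finsupp.single_eq_of_ne']
          intro hc; exact hjj (by injection hc)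
  have := LinearMap.ext_iff.1 hmap x
  rw [LinearMap.comp_apply, Basis.coord_apply, Basis.coord_apply] at this
  exact this

theorem mem_ker_fR {x : V} (h : (C.f^C.R) x = 0) : x ∈ C.Ua 0 ⊔ C.Wb (C.S - C.R) := by
  rw [mem_UW_iff]
  intro p hp
  rcases p with i | j
  · exact Or.inl ⟨i, rfl, by omega⟩
  · refine Or.inr ⟨j, rfl, ?_⟩
    by_contra hj
    have hjR : (j:ℕ) + C.R < C.S := by have := C.RltS; omega
    have := C.coord_shift_v C.R j hjR x
    rw [h, map_zero, Finsupp.zero_apply] at this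
    exact (Finsupp.mem_support_iff.1 hp) this.symm

theorem endo_pow_commutes {g : V →ₗ[ZMod 2] V} (hg : ∀ x, g (C.f x) = C.f (g x)) (k : ℕ) :
    ∀ x, g ((C.f^k) x) = (C.f^k) (g x) := by
  induction k with
  | zero => intro x; simp
  | succ n ih =>
      intro x
      rw [pow_succ', Module.End.mul_apply, Module.End.mul_apply, hg, ih]

theorem endo_u_mem {g : V →ₗ[ZMod 2] V} (hg : ∀ x, g (C.f x) = C.f (g x)) :
    g C.u ∈ C.Ua 0 ⊔ C.Wb (C.S - C.R) := by
  refine C.mem_ker_fR ?_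
  rw [← C.endo_pow_commutes hg C.R, C.fR_u, map_zero]

theorem mem_Wb_last {z : V} (hz : z ∈ C.Wb (C.S - 1)) :
    z = 0 ∨ z = (C.f^(C.S-1)) C.v := by
  induction hz using Submodule.span_induction with
  | mem y hy =>
      obtain ⟨i, rfl⟩ := hy
      rcases Nat.eq_zero_or_pos i with hi | hi
      · subst hi; right; simp
      · left
        have h1 : (C.f^i) ((C.f^(C.S-1)) C.v) = (C.f^(C.S-1+i)) C.v := by
          rw [← Module.End.mul_apply, ← pow_add, Nat.add_comm]
        simp only []
        rw [h1, C.fpow_v_zero _ (by omega)]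
  | zero => exact Or.inl rfl
  | add a b _ _ ha hb =>
      rcases ha with ha | ha <;> rcases hb with hb | hb <;> subst ha <;> subst hb
      · left; rw [add_zero]
      · right; rw [zero_add]
      · right; rw [add_zero]
      · left; rw [add_self]
  | smul c a _ ha =>
      have hc : c = 0 ∨ c = 1 := by revert c; decide
      rcases hc with hc | hc
      · left; rw [hc, zero_smul]
      · rw [hc, one_smul]; exact ha

theorem Spos : 0 < C.S := by have := C.hRS; omega

/-- classification: a commuting automorphism moves `u` by higher terms. -/
theorem auto_u_mem {α : V ≃ₗ[ZMod 2] V} (hα : Commutes C.f α) :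
    α C.u - C.u ∈ C.Ua 1 ⊔ C.Wb (C.S - C.R) := by
  rcases Nat.eq_zero_or_pos C.R with hR | hR
  · have hu0 : C.u = 0 := by
      have := (C.exp_spec C.u).1
      rwa [C.heu, hR, pow_zero, Module.End.one_apply] at this
    rw [hu0, map_zero, sub_zero]
    exact zero_mem _
  have hy : α C.u ∈ C.Ua 0 ⊔ C.Wb (C.S - C.R) :=
    C.endo_u_mem (g := (α : V →ₗ[ZMod 2] V)) hα
  -- the leading coefficient
  set c := C.B.repr (α C.u) (Sum.inl ⟨0, hR⟩) with hc
  have hcases : c = 0 ∨ c = 1 := by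
    generalize c = c'; revert c'; decide
  have hc1 : c = 1 := by
    rcases hcases with hc0 | hc1
    · exfalso
      -- then α u ∈ Ua 1 ⊔ Wb (S-R)
      have hy1 : α C.u ∈ C.Ua 1 ⊔ C.Wb (C.S - C.R) := by
        rw [mem_UW_iff]
        intro p hp
        rcases p with i | j
        · refine Or.inl ⟨i, rfl, ?_⟩
          rcases Nat.eq_zero_or_pos (i:ℕ) with hi | hi
          · exfalso
            have : i = ⟨0, hR⟩ := Fin.ext hi
            rw [this] at hp
            exact (Finsupp.mem_support_iff.1 hp) (by rw [← hc, hc0])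
          · omega
        · rw [mem_UW_iff] at hy
          rcases hy _ hp with ⟨i', hi', _⟩ | hj
          · exact absurd hi' (by simp)
          · exact Or.inr hj
      -- α (f^(R-1) u) lands in Wb (S-1)
      have hstep : α ((C.f^(C.R-1)) C.u) ∈ C.Wb (C.S - 1) := by
        rw [commutes_pow hα]
        have := C.pow_mem_UW (k := C.R - 1) hy1
        rw [C.Ua_bot (a := 1 + (C.R - 1)) (by omega)] at this
        have h2 : C.S - C.R + (C.R - 1) = C.S - 1 := by have := C.RltS; omega
        rw [h2] at this
        simpa using this
      have hstep2 : α ((C.f^(C.S-1)) C.v) ∈ C.Wb (C.S - 1) := by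
        rw [commutes_pow hα]
        have hv : α C.v ∈ C.Ua 0 ⊔ C.Wb 0 := by rw [← C.top_eq]; trivial
        have := C.pow_mem_UW (k := C.S - 1) hv
        rw [C.Ua_bot (a := 0 + (C.S - 1)) (by have := C.RltS; omega)] at this
        have h2 : (0:ℕ) + (C.S - 1) = C.S - 1 := by omega
        rw [h2] at this
        simpa using this
      have hSpos := C.Spos
      have hne1 : (C.f^(C.R-1)) C.u ≠ 0 := C.fi_u_ne (C.R-1) (by omega)
      have hne2 : (C.f^(C.S-1)) C.v ≠ 0 := C.fj_v_ne (C.S-1) (by omega)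
      rcases C.mem_Wb_last hstep with h1 | h1
      · exact hne1 (by
          have := α.injective (a₁ := (C.f^(C.R-1)) C.u) (a₂ := 0)
          simp only [map_zero] at this
          exact this h1)
      rcases C.mem_Wb_last hstep2 with h2 | h2
      · exact hne2 (by
          have := α.injective (a₁ := (C.f^(C.S-1)) C.v) (a₂ := 0)
          simp only [map_zero] at this
          exact this h2)
      have heq : (C.f^(C.R-1)) C.u = (C.f^(C.S-1)) C.v := α.injective (h1.trans h2.symm)
      -- contradiction via coordinates
      have hco := congrArg (fun z => C.B.repr z (Sum.inl ⟨C.R-1, by omega⟩)) heq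
      rw [C.repr_fu ⟨C.R-1, by omega⟩, C.repr_fv ⟨C.S-1, by omega⟩] at hco
      rw [Finsupp.single_eq_same, Finsupp.single_eq_of_ne (by simp)] at hco
      exact one_ne_zero hco
    · exact hc1
  -- now conclude
  rw [mem_UW_iff]
  intro p hp
  have hrepr : C.B.repr (α C.u - C.u) p = C.B.repr (α C.u) p - C.B.repr C.u p := by
    rw [map_sub]; rfl
  rcases p with i | j
  · refine Or.inl ⟨i, rfl, ?_⟩
    rcases Nat.eq_zero_or_pos (i:ℕ) with hi | hi
    · exfalso
      have hieq : i = ⟨0, hR⟩ := Fin.ext hi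
      have hu0 : C.B.repr C.u (Sum.inl i) = 1 := by
        have : C.u = (C.f^((⟨0,hR⟩ : Fin C.R):ℕ)) C.u := by simp
        rw [this, C.repr_fu ⟨0,hR⟩, hieq, Finsupp.single_eq_same]
      refine (Finsupp.mem_support_iff.1 hp) ?_
      rw [hrepr, hu0, hieq, ← hc, hc1, sub_self]
    · omega
  · refine Or.inr ⟨j, rfl, ?_⟩
    have hu0 : C.B.repr C.u (Sum.inr j) = 0 := by
      have : C.u = (C.f^((0:ℕ))) C.u := by simp
      rw [this, C.repr_fu ⟨0,hR⟩]
      exact Finsupp.single_eq_of_ne (by simp)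
    have : C.B.repr (α C.u - C.u) (Sum.inr j) = C.B.repr (α C.u) (Sum.inr j) := by
      rw [hrepr, hu0, sub_zero]
    rw [mem_UW_iff] at hy
    have hp' : Sum.inr j ∈ (C.B.repr (α C.u)).support := by
      rw [Finsupp.mem_support_iff, ← this]
      exact Finsupp.mem_support_iff.1 hp
    rcases hy _ hp' with ⟨i', hi', _⟩ | ⟨j', hj', hjj⟩
    · exact absurd hi' (by simp)
    · have : j' = j := by injection hj'.symm
      omega

theorem auto_v_mem {α : V ≃ₗ[ZMod 2] V} (hα : Commutes C.f α) :
    α C.v - C.v ∈ C.Ua 0 ⊔ C.Wb 1 := by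
  have hS : 0 < C.S := C.Spos
  set d := C.B.repr (α C.v) (Sum.inr ⟨0, hS⟩) with hd
  have hcases : d = 0 ∨ d = 1 := by generalize d = d'; revert d'; decide
  have hd1 : d = 1 := by
    rcases hcases with hd0 | hd1
    · exfalso
      have hy1 : α C.v ∈ C.Ua 0 ⊔ C.Wb 1 := by
        rw [mem_UW_iff]
        intro p hp
        rcases p with i | j
        · exact Or.inl ⟨i, rfl, by omega⟩
        · refine Or.inr ⟨j, rfl, ?_⟩
          rcases Nat.eq_zero_or_pos (j:ℕ) with hj | hj
          · exfalso
            have : j = ⟨0, hS⟩ := Fin.ext hj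
            rw [this] at hp
            exact (Finsupp.mem_support_iff.1 hp) (by rw [← hd, hd0])
          · omega
      have hzero : α ((C.f^(C.S-1)) C.v) = 0 := by
        rw [commutes_pow hα]
        have := C.pow_mem_UW (k := C.S - 1) hy1
        rw [C.Ua_bot (a := 0 + (C.S - 1)) (by have := C.RltS; omega),
          C.Wb_bot (b := 1 + (C.S - 1)) (by omega)] at this
        simpa using this
      have hne2 : (C.f^(C.S-1)) C.v ≠ 0 := C.fj_v_ne (C.S-1) (by omega)
      exact hne2 (by
        have := α.injective (a₁ := (C.f^(C.S-1)) C.v) (a₂ := 0)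
        simp only [map_zero] at this
        exact this hzero)
    · exact hd1
  rw [mem_UW_iff]
  intro p hp
  have hrepr : C.B.repr (α C.v - C.v) p = C.B.repr (α C.v) p - C.B.repr C.v p := by
    rw [map_sub]; rfl
  rcases p with i | j
  · exact Or.inl ⟨i, rfl, by omega⟩
  · refine Or.inr ⟨j, rfl, ?_⟩
    rcases Nat.eq_zero_or_pos (j:ℕ) with hj | hj
    · exfalso
      have hjeq : j = ⟨0, hS⟩ := Fin.ext hj
      have hv0 : C.B.repr C.v (Sum.inr j) = 1 := by
        have : C.v = (C.f^((⟨0,hS⟩ : Fin C.S):ℕ)) C.v := by simp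
        rw [this, C.repr_fv ⟨0,hS⟩, hjeq, Finsupp.single_eq_same]
      refine (Finsupp.mem_support_iff.1 hp) ?_
      rw [hrepr, hv0, hjeq, ← hd, hd1, sub_self]
    · omega

end Setup
theorem pow_mem_of_stable {f : V →ₗ[ZMod 2] V} {M : Submodule (ZMod 2) V}
    (hM : ∀ y ∈ M, f y ∈ M) {x : V} (hx : x ∈ M) (i : ℕ) : (f^i) x ∈ M := by
  induction i with
  | zero => simpa using hx
  | succ n ih =>
      rw [pow_succ', Module.End.mul_apply]
      exact hM _ ih

theorem cyc_le_of_mem {f : V →ₗ[ZMod 2] V} {M : Submodule (ZMod 2) V} {x : V}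
    (hx : x ∈ M) (hM : ∀ y ∈ M, f y ∈ M) : cyc f x ≤ M := by
  refine Submodule.span_le.2 ?_
  rintro y ⟨i, rfl⟩
  exact pow_mem_of_stable hM hx i

theorem commutes_refl (f : V →ₗ[ZMod 2] V) : Commutes f (LinearEquiv.refl (ZMod 2) V) :=
  fun _ => rfl

theorem commutes_trans {f : V →ₗ[ZMod 2] V} {α β : V ≃ₗ[ZMod 2] V}
    (hα : Commutes f α) (hβ : Commutes f β) : Commutes f (α.trans β) := by
  intro y
  simp only [LinearEquiv.trans_apply]
  rw [hα, hβ]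

theorem mem_charHull_self {f : V →ₗ[ZMod 2] V} {x : V} : x ∈ charHull f {x} :=
  Submodule.subset_span ⟨x, rfl, 0, LinearEquiv.refl (ZMod 2) V, commutes_refl f, by simp⟩

theorem charHull_f_stable {f : V →ₗ[ZMod 2] V} {Bs : Set V} :
    ∀ y ∈ charHull f Bs, f y ∈ charHull f Bs := by
  intro y hy
  induction hy using Submodule.span_induction with
  | mem y hy =>
      obtain ⟨b, hb, i, α, hα, rfl⟩ := hy
      refine Submodule.subset_span ⟨b, hb, i+1, α, hα, ?_⟩
      rw [pow_succ', Module.End.mul_apply]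
  | zero => simp
  | add a b _ _ ha hb => rw [map_add]; exact add_mem ha hb
  | smul c a _ ha => rw [map_smul]; exact smul_mem _ _ ha

theorem cyc_le_charHull {f : V →ₗ[ZMod 2] V} {x : V} : cyc f x ≤ charHull f {x} :=
  cyc_le_of_mem mem_charHull_self charHull_f_stable

theorem charHull_charinv {f : V →ₗ[ZMod 2] V} {Bs : Set V} : Charinv f (charHull f Bs) := by
  refine ⟨charHull_f_stable, ?_⟩
  intro α hα x hx
  induction hx using Submodule.span_induction with
  | mem y hy =>
      obtain ⟨b, hb, i, β, hβ, rfl⟩ := hy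
      refine Submodule.subset_span ⟨b, hb, i, β.trans α, commutes_trans hβ hα, ?_⟩
      rw [commutes_pow hα]
      rfl
  | zero => simp
  | add a b _ _ ha hb => rw [map_add]; exact add_mem ha hb
  | smul c a _ ha => rw [map_smul]; exact smul_mem _ _ ha

theorem charHull_le_of_charinv {f : V →ₗ[ZMod 2] V} {X : Submodule (ZMod 2) V}
    (hX : Charinv f X) {x : V} (hx : x ∈ X) : charHull f {x} ≤ X := by
  refine Submodule.span_le.2 ?_
  rintro y ⟨b, hb, i, α, hα, rfl⟩
  rcases hb with rfl
  exact pow_mem_of_stable hX.1 (hX.2 α hα b hx) i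

theorem charHull_auto_eq {f : V →ₗ[ZMod 2] V} {x : V} {α : V ≃ₗ[ZMod 2] V}
    (hα : Commutes f α) : charHull f {α x} = charHull f {x} := by
  apply le_antisymm
  · refine Submodule.span_le.2 ?_
    rintro y ⟨b, hb, i, β, hβ, rfl⟩
    rcases hb with rfl
    refine Submodule.subset_span ⟨x, rfl, i, α.trans β, commutes_trans hα hβ, rfl⟩
  · refine Submodule.span_le.2 ?_
    rintro y ⟨b, hb, i, β, hβ, rfl⟩
    have hbx : b = x := hb
    subst hbx
    refine Submodule.subset_span ⟨α b, rfl, i, α.symm.trans β,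
      commutes_trans (commutes_symm hα) hβ, ?_⟩
    simp only [LinearEquiv.trans_apply, LinearEquiv.symm_apply_apply]

namespace Setup

variable {V : Type*} [AddCommGroup V] [Module (ZMod 2) V] (C : Setup V)

theorem Ua_min (c d : ℕ) : C.Ua (min c d) = C.Ua c ⊔ C.Ua d := by
  rcases le_total c d with h | h
  · rw [min_eq_left h, sup_eq_left.2 (C.Ua_mono h)]
  · rw [min_eq_right h, sup_eq_right.2 (C.Ua_mono h)]

theorem Wb_min (c d : ℕ) : C.Wb (min c d) = C.Wb c ⊔ C.Wb d := by
  rcases le_total c d with h | h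
  · rw [min_eq_left h, sup_eq_left.2 (C.Wb_mono h)]
  · rw [min_eq_right h, sup_eq_right.2 (C.Wb_mono h)]

/-- The main hull computation. -/
theorem hull_eq (a b : ℕ) :
    charHull C.f {(C.f^a) C.u + (C.f^b) C.v}
      = cyc C.f ((C.f^a) C.u + (C.f^b) C.v)
        ⊔ (C.Ua (min (a+1) b) ⊔ C.Wb (min (C.S - C.R + a) (b+1))) := by
  set x := (C.f^a) C.u + (C.f^b) C.v with hx
  apply le_antisymm
  · refine Submodule.span_le.2 ?_
    rintro y ⟨b', hb', i, α, hα, rfl⟩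
    rcases hb' with rfl
    have he1 := C.auto_u_mem hα
    have he2 := C.auto_v_mem hα
    have hdec : α x = x + ((C.f^a) (α C.u - C.u) + (C.f^b) (α C.v - C.v)) := by
      rw [hx, map_add, commutes_pow hα, commutes_pow hα, map_sub, map_sub]
      abel
    rw [hdec, map_add]
    refine add_mem (Submodule.mem_sup_left (pow_mem_cyc _ _ _)) (Submodule.mem_sup_right ?_)
    rw [map_add]
    refine add_mem ?_ ?_
    · have h1 : (C.f^i) ((C.f^a) (α C.u - C.u)) = (C.f^(a+i)) (α C.u - C.u) := by
        rw [← Module.End.mul_apply, ← pow_add, Nat.add_comm]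
      rw [h1]
      exact C.UW_mono (by omega) (by omega) (C.pow_mem_UW (k := a+i) he1)
    · have h1 : (C.f^i) ((C.f^b) (α C.v - C.v)) = (C.f^(b+i)) (α C.v - C.v) := by
        rw [← Module.End.mul_apply, ← pow_add, Nat.add_comm]
      rw [h1]
      exact C.UW_mono (by omega) (by omega) (C.pow_mem_UW (k := b+i) he2)
  · refine sup_le cyc_le_charHull (sup_le ?_ ?_)
    · rw [C.Ua_min]
      refine sup_le ?_ ?_
      · -- f^(a+1) u ∈ hull via u ↦ u + f u
        have hz1 : C.f C.u ∈ C.Ua 1 ⊔ C.Wb (C.S - C.R) := by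
          refine Submodule.mem_sup_left ?_
          have : C.f C.u = (C.f^1) C.u := by rw [pow_one]
          rw [this]
          exact C.fu_mem_Ua 1
        have hz2 : (0:V) ∈ C.Ua 0 ⊔ C.Wb 1 := zero_mem _
        set α := C.mkAuto hz1 hz2 with hα
        have hval : α x = x + (C.f^(a+1)) C.u := by
          rw [hx, map_add, C.mkAuto_fu hz1 hz2, C.mkAuto_fv hz1 hz2, map_zero, add_zero]
          have : (C.f^a) (C.f C.u) = (C.f^(a+1)) C.u := by
            rw [pow_succ, Module.End.mul_apply]
          rw [this]
          abel
        have hmem : (C.f^(a+1)) C.u ∈ charHull C.f {x} := by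
          have h1 : α x ∈ charHull C.f {x} :=
            Submodule.subset_span ⟨x, rfl, 0, α, C.mkAuto_commutes hz1 hz2, by simp⟩
          have h2 : x ∈ charHull C.f {x} := mem_charHull_self
          have := sub_mem h1 h2
          rwa [hval, add_sub_cancel_left] at this
        exact cyc_le_of_mem hmem charHull_f_stable
      · -- f^b u ∈ hull via v ↦ v + u
        have hz1 : (0:V) ∈ C.Ua 1 ⊔ C.Wb (C.S - C.R) := zero_mem _
        have hz2 : C.u ∈ C.Ua 0 ⊔ C.Wb 1 := by
          refine Submodule.mem_sup_left ?_
          have : C.u = (C.f^0) C.u := by simp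
          rw [this]
          exact C.fu_mem_Ua 0
        set α := C.mkAuto hz1 hz2 with hα
        have hval : α x = x + (C.f^b) C.u := by
          rw [hx, map_add, C.mkAuto_fu hz1 hz2, C.mkAuto_fv hz1 hz2, map_zero, add_zero]
          abel
        have hmem : (C.f^b) C.u ∈ charHull C.f {x} := by
          have h1 : α x ∈ charHull C.f {x} :=
            Submodule.subset_span ⟨x, rfl, 0, α, C.mkAuto_commutes hz1 hz2, by simp⟩
          have := sub_mem h1 (mem_charHull_self (f := C.f) (x := x))
          rwa [hval, add_sub_cancel_left] at this
        exact cyc_le_of_mem hmem charHull_f_stable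
    · rw [C.Wb_min]
      refine sup_le ?_ ?_
      · -- f^(S-R+a) v ∈ hull via u ↦ u + f^(S-R) v
        have hz1 : (C.f^(C.S-C.R)) C.v ∈ C.Ua 1 ⊔ C.Wb (C.S - C.R) :=
          Submodule.mem_sup_right (C.fv_mem_Wb _)
        have hz2 : (0:V) ∈ C.Ua 0 ⊔ C.Wb 1 := zero_mem _
        set α := C.mkAuto hz1 hz2 with hα
        have hval : α x = x + (C.f^(C.S-C.R+a)) C.v := by
          rw [hx, map_add, C.mkAuto_fu hz1 hz2, C.mkAuto_fv hz1 hz2, map_zero, add_zero]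
          have : (C.f^a) ((C.f^(C.S-C.R)) C.v) = (C.f^(C.S-C.R+a)) C.v := by
            rw [← Module.End.mul_apply, ← pow_add, Nat.add_comm]
          rw [this]
          abel
        have hmem : (C.f^(C.S-C.R+a)) C.v ∈ charHull C.f {x} := by
          have h1 : α x ∈ charHull C.f {x} :=
            Submodule.subset_span ⟨x, rfl, 0, α, C.mkAuto_commutes hz1 hz2, by simp⟩
          have := sub_mem h1 (mem_charHull_self (f := C.f) (x := x))
          rwa [hval, add_sub_cancel_left] at this
        exact cyc_le_of_mem hmem charHull_f_stable
      · -- f^(b+1) v ∈ hull via v ↦ v + f v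
        have hz1 : (0:V) ∈ C.Ua 1 ⊔ C.Wb (C.S - C.R) := zero_mem _
        have hz2 : C.f C.v ∈ C.Ua 0 ⊔ C.Wb 1 := by
          refine Submodule.mem_sup_right ?_
          have : C.f C.v = (C.f^1) C.v := by rw [pow_one]
          rw [this]
          exact C.fv_mem_Wb 1
        set α := C.mkAuto hz1 hz2 with hα
        have hval : α x = x + (C.f^(b+1)) C.v := by
          rw [hx, map_add, C.mkAuto_fu hz1 hz2, C.mkAuto_fv hz1 hz2, map_zero, add_zero]
          have : (C.f^b) (C.f C.v) = (C.f^(b+1)) C.v := by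
            rw [pow_succ, Module.End.mul_apply]
          rw [this]
          abel
        have hmem : (C.f^(b+1)) C.v ∈ charHull C.f {x} := by
          have h1 : α x ∈ charHull C.f {x} :=
            Submodule.subset_span ⟨x, rfl, 0, α, C.mkAuto_commutes hz1 hz2, by simp⟩
          have := sub_mem h1 (mem_charHull_self (f := C.f) (x := x))
          rwa [hval, add_sub_cancel_left] at this
        exact cyc_le_of_mem hmem charHull_f_stable

end Setup
namespace Setup

variable {V : Type*} [AddCommGroup V] [Module (ZMod 2) V] (C : Setup V)

theorem hull_case1 (a b : ℕ) (hba : b ≤ a) :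
    charHull C.f {(C.f^a) C.u + (C.f^b) C.v} = C.Ua b ⊔ C.Wb b := by
  have hRS := C.RltS
  have hUle : C.Ua b ≤ charHull C.f {(C.f^a) C.u + (C.f^b) C.v} := by
    have h : min (a+1) b = b := by omega
    rw [C.hull_eq a b, h]
    exact le_sup_of_le_right le_sup_left
  apply le_antisymm
  · rw [C.hull_eq a b]
    refine sup_le ?_ (sup_le ?_ ?_)
    · refine cyc_le_of_mem ?_ (C.UW_f_stable b b)
      exact add_mem (Submodule.mem_sup_left (C.fu_mem_Ua' hba))
        (Submodule.mem_sup_right (C.fv_mem_Wb b))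
    · exact (C.Ua_mono (by omega)).trans le_sup_left
    · exact (C.Wb_mono (by omega)).trans le_sup_right
  · refine sup_le hUle ?_
    have hfav : (C.f^b) C.v ∈ charHull C.f {(C.f^a) C.u + (C.f^b) C.v} := by
      have h1 : (C.f^a) C.u + (C.f^b) C.v ∈ charHull C.f {(C.f^a) C.u + (C.f^b) C.v} :=
        mem_charHull_self
      have h2 : (C.f^a) C.u ∈ charHull C.f {(C.f^a) C.u + (C.f^b) C.v} :=
        hUle (C.fu_mem_Ua' hba)
      have := sub_mem h1 h2
      rwa [add_sub_cancel_left] at this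
    exact cyc_le_of_mem hfav charHull_f_stable

theorem hull_case2 (a b : ℕ) (hab : a < b) (h2 : a + C.S ≤ b + C.R) :
    charHull C.f {(C.f^a) C.u + (C.f^b) C.v} = C.Ua a ⊔ C.Wb (C.S - C.R + a) := by
  have hRS := C.RltS
  have hWle : C.Wb (C.S - C.R + a) ≤ charHull C.f {(C.f^a) C.u + (C.f^b) C.v} := by
    have h : min (C.S - C.R + a) (b+1) = C.S - C.R + a := by omega
    rw [C.hull_eq a b, h]
    exact le_sup_of_le_right le_sup_right
  apply le_antisymm
  · rw [C.hull_eq a b]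
    refine sup_le ?_ (sup_le ?_ ?_)
    · refine cyc_le_of_mem ?_ (C.UW_f_stable a (C.S - C.R + a))
      refine add_mem (Submodule.mem_sup_left (C.fu_mem_Ua a))
        (Submodule.mem_sup_right (C.fv_mem_Wb' (by omega)))
    · exact (C.Ua_mono (by omega)).trans le_sup_left
    · exact (C.Wb_mono (by omega)).trans le_sup_right
  · refine sup_le ?_ hWle
    have hfau : (C.f^a) C.u ∈ charHull C.f {(C.f^a) C.u + (C.f^b) C.v} := by
      have h1 : (C.f^a) C.u + (C.f^b) C.v ∈ charHull C.f {(C.f^a) C.u + (C.f^b) C.v} :=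
        mem_charHull_self
      have h2 : (C.f^b) C.v ∈ charHull C.f {(C.f^a) C.u + (C.f^b) C.v} :=
        hWle (C.fv_mem_Wb' (by omega))
      have := sub_mem h1 h2
      rwa [add_sub_cancel_right] at this
    exact cyc_le_of_mem hfau charHull_f_stable

theorem hull_case3 (a b : ℕ) (hab : a < b) (h2 : b + C.R < a + C.S) :
    charHull C.f {(C.f^a) C.u + (C.f^b) C.v}
      = cyc C.f ((C.f^a) C.u + (C.f^b) C.v) ⊔ (C.Ua (a+1) ⊔ C.Wb (b+1)) := by
  have hRS := C.RltS
  have e1 : min (a+1) b = a+1 := by omega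
  have e2 : min (C.S - C.R + a) (b+1) = b+1 := by omega
  rw [C.hull_eq a b, e1, e2]

theorem hyper_UW (c d : ℕ) (h1 : c ≤ d ∨ C.R ≤ d) (h2 : d ≤ (C.S - C.R) + c ∨ C.R ≤ c) :
    Hyperinv C.f (C.Ua c ⊔ C.Wb d) := by
  intro g hg x hx
  obtain ⟨p, hp, q, hq, rfl⟩ := Submodule.mem_sup.1 hx
  rw [map_add]
  refine add_mem ?_ ?_
  · rcases h2 with h2 | h2
    · refine cyc_induct g (fun i => ?_) p hp
      have h1' : (C.f^i) ((C.f^c) C.u) = (C.f^(c+i)) C.u := by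
        rw [← Module.End.mul_apply, ← pow_add, Nat.add_comm]
      rw [h1', C.endo_pow_commutes hg (c+i)]
      exact C.UW_mono (by omega) (by omega) (C.pow_mem_UW (k := c+i) (C.endo_u_mem hg))
    · rw [C.Ua_bot h2, Submodule.mem_bot] at hp
      rw [hp, map_zero]
      exact zero_mem _
  · have hgv : g C.v ∈ C.Ua 0 ⊔ C.Wb 0 := by rw [← C.top_eq]; trivial
    rcases h1 with h1 | h1
    · refine cyc_induct g (fun j => ?_) q hq
      have h1' : (C.f^j) ((C.f^d) C.v) = (C.f^(d+j)) C.v := by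
        rw [← Module.End.mul_apply, ← pow_add, Nat.add_comm]
      rw [h1', C.endo_pow_commutes hg (d+j)]
      exact C.UW_mono (by omega) (by omega) (C.pow_mem_UW (k := d+j) hgv)
    · refine cyc_induct g (fun j => ?_) q hq
      have h1' : (C.f^j) ((C.f^d) C.v) = (C.f^(d+j)) C.v := by
        rw [← Module.End.mul_apply, ← pow_add, Nat.add_comm]
      rw [h1', C.endo_pow_commutes hg (d+j)]
      have hm := C.pow_mem_UW (k := d+j) hgv
      rw [C.Ua_bot (a := 0 + (d+j)) (by omega), bot_sup_eq] at hm
      exact Submodule.mem_sup_right (C.Wb_mono (by omega) hm)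

theorem coord_zero_of_mem_Ua {c : ℕ} {y : V} (hy : y ∈ C.Ua c) {p : Fin C.R ⊕ Fin C.S}
    (hp : p ∉ C.SU c) : C.B.repr y p = 0 := by
  by_contra h
  exact hp ((C.mem_Ua_iff.1 hy) p (Finsupp.mem_support_iff.2 h))

theorem coord_zero_of_mem_Wb {d : ℕ} {y : V} (hy : y ∈ C.Wb d) {p : Fin C.R ⊕ Fin C.S}
    (hp : p ∉ C.SW d) : C.B.repr y p = 0 := by
  by_contra h
  exact hp ((C.mem_Wb_iff.1 hy) p (Finsupp.mem_support_iff.2 h))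

theorem fbv_not_mem_hull (a b : ℕ) (haR : a < C.R) (hbS : b < C.S) (hab : a < b)
    (h2 : b + C.R < a + C.S) :
    (C.f^b) C.v ∉ charHull C.f {(C.f^a) C.u + (C.f^b) C.v} := by
  intro hmem
  set φ := C.B.coord (Sum.inl ⟨a, haR⟩) - C.B.coord (Sum.inr ⟨b, hbS⟩) with hφ
  have hker : ∀ y ∈ charHull C.f {(C.f^a) C.u + (C.f^b) C.v}, φ y = 0 := by
    intro y hy
    rw [C.hull_case3 a b hab h2] at hy
    obtain ⟨y1, hy1, y23, hy23, rfl⟩ := Submodule.mem_sup.1 hy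
    obtain ⟨y2, hy2, y3, hy3, rfl⟩ := Submodule.mem_sup.1 hy23
    have hv1 : φ y1 = 0 := by
      clear hy
      induction hy1 using Submodule.span_induction with
      | mem z hz =>
          obtain ⟨i, rfl⟩ := hz
          simp only []
          rw [hφ, LinearMap.sub_apply, Basis.coord_apply, Basis.coord_apply, map_add,
            map_add]
          have hcu : (C.f^i) ((C.f^a) C.u) = (C.f^(a+i)) C.u := by
            rw [← Module.End.mul_apply, ← pow_add, Nat.add_comm]
          have hcv : (C.f^i) ((C.f^b) C.v) = (C.f^(b+i)) C.v := by
            rw [← Module.End.mul_apply, ← pow_add, Nat.add_comm]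
          rw [hcu, hcv]
          rcases Nat.eq_zero_or_pos i with hi | hi
          · subst hi
            rw [Nat.add_zero, Nat.add_zero, C.repr_fu ⟨a, haR⟩, C.repr_fv ⟨b, hbS⟩]
            rw [Finsupp.add_apply, Finsupp.add_apply]
            rw [Finsupp.single_eq_same, Finsupp.single_eq_same,
              Finsupp.single_eq_of_ne (by simp), Finsupp.single_eq_of_ne (by simp)]
            ring
          · have hu0 : C.B.repr ((C.f^(a+i)) C.u) = ite (a+i < C.R)
                (C.B.repr ((C.f^(a+i)) C.u)) (C.B.repr ((C.f^(a+i)) C.u)) := by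
              simp
            by_cases hau : a+i < C.R
            · by_cases hbv : b+i < C.S
              · rw [C.repr_fu ⟨a+i, hau⟩, C.repr_fv ⟨b+i, hbv⟩]
                rw [Finsupp.add_apply, Finsupp.add_apply]
                rw [Finsupp.single_eq_of_ne (by simp; omega),
                  Finsupp.single_eq_of_ne (by simp),
                  Finsupp.single_eq_of_ne (by simp),
                  Finsupp.single_eq_of_ne (by simp; omega)]
                ring
              · rw [C.repr_fu ⟨a+i, hau⟩, C.fpow_v_zero _ (by omega), map_zero]
                rw [Finsupp.add_apply, Finsupp.add_apply]
                rw [Finsupp.single_eq_of_ne (by simp; omega),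
                  Finsupp.single_eq_of_ne (by simp)]
                simp
            · by_cases hbv : b+i < C.S
              · rw [C.fpow_u_zero _ (by omega), map_zero, C.repr_fv ⟨b+i, hbv⟩]
                rw [Finsupp.add_apply, Finsupp.add_apply]
                rw [Finsupp.single_eq_of_ne (by simp),
                  Finsupp.single_eq_of_ne (by simp; omega)]
                simp
              · rw [C.fpow_u_zero _ (by omega), C.fpow_v_zero _ (by omega)]
                simp
      | zero => simp
      | add w1 w2 _ _ hw1 hw2 => rw [map_add, hw1, hw2, add_zero]
      | smul c z _ hz => rw [map_smul, hz, smul_zero]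
    have hv2 : φ y2 = 0 := by
      rw [hφ, LinearMap.sub_apply, Basis.coord_apply, Basis.coord_apply]
      rw [C.coord_zero_of_mem_Ua hy2 (p := Sum.inl ⟨a, haR⟩) ?_,
        C.coord_zero_of_mem_Ua hy2 (p := Sum.inr ⟨b, hbS⟩) ?_]
      · ring
      · rintro ⟨i, hi, -⟩
        exact absurd hi (by simp)
      · rintro ⟨i, hi, hle⟩
        have : (i:ℕ) = a := by
          have := Sum.inl.inj hi; exact (congrArg Fin.val this).symm
        omega
    have hv3 : φ y3 = 0 := by
      rw [hφ, LinearMap.sub_apply, Basis.coord_apply, Basis.coord_apply]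
      rw [C.coord_zero_of_mem_Wb hy3 (p := Sum.inl ⟨a, haR⟩) ?_,
        C.coord_zero_of_mem_Wb hy3 (p := Sum.inr ⟨b, hbS⟩) ?_]
      · ring
      · rintro ⟨j, hj, hle⟩
        have : (j:ℕ) = b := by
          have := Sum.inr.inj hj; exact (congrArg Fin.val this).symm
        omega
      · rintro ⟨j, hj, -⟩
        exact absurd hj (by simp)
    rw [map_add, map_add, hv1, hv2, hv3]
    ring
  have hval := hker _ hmem
  rw [hφ, LinearMap.sub_apply, Basis.coord_apply, Basis.coord_apply,
    C.repr_fv ⟨b, hbS⟩] at hval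
  rw [Finsupp.single_eq_of_ne (by simp), Finsupp.single_eq_same] at hval
  rw [zero_sub] at hval
  exact one_ne_zero (neg_eq_zero.1 hval)

theorem hull_not_hyper (a b : ℕ) (haR : a < C.R) (hbS : b < C.S) (hab : a < b)
    (h2 : b + C.R < a + C.S) :
    ¬ Hyperinv C.f (charHull C.f {(C.f^a) C.u + (C.f^b) C.v}) := by
  intro hH
  have hg0 : (C.f^C.R) (0:V) = 0 := by simp
  have hgc : ∀ y, C.mkEnd 0 C.v (C.f y) = C.f (C.mkEnd 0 C.v y) :=
    C.mkEnd_commutes 0 C.v hg0 C.fS_v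
  have hx : (C.f^a) C.u + (C.f^b) C.v ∈ charHull C.f {(C.f^a) C.u + (C.f^b) C.v} :=
    mem_charHull_self
  have hmem := hH (C.mkEnd 0 C.v) hgc _ hx
  have hgx : C.mkEnd 0 C.v ((C.f^a) C.u + (C.f^b) C.v) = (C.f^b) C.v := by
    rw [map_add, C.mkEnd_fu 0 C.v hg0 C.fS_v a, C.mkEnd_fv 0 C.v hg0 C.fS_v b,
      map_zero, zero_add]
  rw [hgx] at hmem
  exact C.fbv_not_mem_hull a b haR hbS hab h2 hmem

end Setup
namespace Setup

variable {V : Type*} [AddCommGroup V] [Module (ZMod 2) V] (C : Setup V)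

/-- u-height of `x`. -/
noncomputable def hU (x : V) : ℕ :=
  sInf ({a : ℕ | ∃ h : a < C.R, C.B.repr x (Sum.inl ⟨a, h⟩) ≠ 0} ∪ {C.R})

/-- v-height of `x`. -/
noncomputable def hW (x : V) : ℕ :=
  sInf ({b : ℕ | ∃ h : b < C.S, C.B.repr x (Sum.inr ⟨b, h⟩) ≠ 0} ∪ {C.S})

theorem hU_le (x : V) : C.hU x ≤ C.R :=
  Nat.sInf_le (Or.inr rfl)

theorem hW_le (x : V) : C.hW x ≤ C.S :=
  Nat.sInf_le (Or.inr rfl)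

theorem hU_le_of_coord {x : V} {i : Fin C.R} (h : C.B.repr x (Sum.inl i) ≠ 0) :
    C.hU x ≤ (i:ℕ) :=
  Nat.sInf_le (Or.inl ⟨i.2, by simpa using h⟩)

theorem hW_le_of_coord {x : V} {j : Fin C.S} (h : C.B.repr x (Sum.inr j) ≠ 0) :
    C.hW x ≤ (j:ℕ) :=
  Nat.sInf_le (Or.inl ⟨j.2, by simpa using h⟩)

theorem coord_lt_hU {x : V} {i : Fin C.R} (h : (i:ℕ) < C.hU x) :
    C.B.repr x (Sum.inl i) = 0 := by
  by_contra hc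
  exact absurd (C.hU_le_of_coord hc) (by omega)

theorem coord_lt_hW {x : V} {j : Fin C.S} (h : (j:ℕ) < C.hW x) :
    C.B.repr x (Sum.inr j) = 0 := by
  by_contra hc
  exact absurd (C.hW_le_of_coord hc) (by omega)

theorem zmod2_ne_zero {c : ZMod 2} (h : c ≠ 0) : c = 1 := by
  revert h; revert c; decide

theorem coord_hU_one {x : V} (h : C.hU x < C.R) :
    C.B.repr x (Sum.inl ⟨C.hU x, h⟩) = 1 := by
  have hmem : C.hU x ∈ ({a : ℕ | ∃ h : a < C.R, C.B.repr x (Sum.inl ⟨a, h⟩) ≠ 0} ∪ {C.R}) :=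
    Nat.sInf_mem (Set.nonempty_of_mem (Or.inr rfl))
  rcases hmem with ⟨h', hne⟩ | hR
  · exact zmod2_ne_zero hne
  · exact absurd hR (by simp only [Set.mem_singleton_iff]; omega)

theorem coord_hW_one {x : V} (h : C.hW x < C.S) :
    C.B.repr x (Sum.inr ⟨C.hW x, h⟩) = 1 := by
  have hmem : C.hW x ∈ ({b : ℕ | ∃ h : b < C.S, C.B.repr x (Sum.inr ⟨b, h⟩) ≠ 0} ∪ {C.S}) :=
    Nat.sInf_mem (Set.nonempty_of_mem (Or.inr rfl))
  rcases hmem with ⟨h', hne⟩ | hS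
  · exact zmod2_ne_zero hne
  · exact absurd hS (by simp only [Set.mem_singleton_iff]; omega)

theorem hU_ge {x : V} {n : ℕ} (hn : n ≤ C.R)
    (h : ∀ i : Fin C.R, (i:ℕ) < n → C.B.repr x (Sum.inl i) = 0) : n ≤ C.hU x := by
  by_contra hc
  push_neg at hc
  have hlt : C.hU x < C.R := by omega
  have := C.coord_hU_one hlt
  rw [h ⟨C.hU x, hlt⟩ hc] at this
  exact zero_ne_one this

theorem hW_ge {x : V} {n : ℕ} (hn : n ≤ C.S)
    (h : ∀ j : Fin C.S, (j:ℕ) < n → C.B.repr x (Sum.inr j) = 0) : n ≤ C.hW x := by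
  by_contra hc
  push_neg at hc
  have hlt : C.hW x < C.S := by omega
  have := C.coord_hW_one hlt
  rw [h ⟨C.hW x, hlt⟩ hc] at this
  exact zero_ne_one this

theorem mem_UW_heights (x : V) : x ∈ C.Ua (C.hU x) ⊔ C.Wb (C.hW x) := by
  rw [mem_UW_iff]
  intro p hp
  rcases p with i | j
  · refine Or.inl ⟨i, rfl, ?_⟩
    by_contra hc
    exact (Finsupp.mem_support_iff.1 hp) (C.coord_lt_hU (by omega))
  · refine Or.inr ⟨j, rfl, ?_⟩
    by_contra hc
    exact (Finsupp.mem_support_iff.1 hp) (C.coord_lt_hW (by omega))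

theorem hU_fv {k : ℕ} (hk : k < C.S) : C.hW ((C.f^k) C.v) = k := by
  apply le_antisymm
  · refine C.hW_le_of_coord (j := ⟨k, hk⟩) ?_
    rw [C.repr_fv ⟨k, hk⟩, Finsupp.single_eq_same]
    exact one_ne_zero
  · refine C.hW_ge (by omega) ?_
    intro j hj
    rw [C.repr_fv ⟨k, hk⟩]
    refine Finsupp.single_eq_of_ne ?_
    intro hc
    have := congrArg Fin.val (Sum.inr.inj hc)
    simp at this
    omega

theorem hU_fu {k : ℕ} (hk : k < C.R) : C.hU ((C.f^k) C.u) = k := by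
  apply le_antisymm
  · refine C.hU_le_of_coord (i := ⟨k, hk⟩) ?_
    rw [C.repr_fu ⟨k, hk⟩, Finsupp.single_eq_same]
    exact one_ne_zero
  · refine C.hU_ge (by omega) ?_
    intro i hi
    rw [C.repr_fu ⟨k, hk⟩]
    refine Finsupp.single_eq_of_ne ?_
    intro hc
    have := congrArg Fin.val (Sum.inl.inj hc)
    simp at this
    omega

/-- the u-side lift. -/
noncomputable def uT (x : V) : V :=
  ∑ i : Fin C.R, (C.B.repr x (Sum.inl i)) • ((C.f^((i:ℕ) - C.hU x)) C.u)

noncomputable def vT (x : V) : V :=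
  ∑ j : Fin C.S, (C.B.repr x (Sum.inr j)) • ((C.f^((j:ℕ) - C.hW x)) C.v)

noncomputable def zU (x : V) : V := if C.hU x < C.R then C.uT x - C.u else 0

noncomputable def zW (x : V) : V := if C.hW x < C.S then C.vT x - C.v else 0

theorem zU_mem (x : V) : C.zU x ∈ C.Ua 1 ⊔ C.Wb (C.S - C.R) := by
  rw [zU]
  split
  · rename_i h
    refine Submodule.mem_sup_left ?_
    have hsum : C.uT x
        = (C.B.repr x (Sum.inl ⟨C.hU x, h⟩))
            • ((C.f^((C.hU x) - C.hU x)) C.u)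
          + ∑ i ∈ Finset.univ.erase (⟨C.hU x, h⟩ : Fin C.R),
              (C.B.repr x (Sum.inl i)) • ((C.f^((i:ℕ) - C.hU x)) C.u) := by
      rw [uT]
      exact (Finset.add_sum_erase _ _ (Finset.mem_univ _)).symm
    have hfirst : (C.B.repr x (Sum.inl ⟨C.hU x, h⟩))
        • ((C.f^((C.hU x) - C.hU x)) C.u) = C.u := by
      rw [C.coord_hU_one h, one_smul, Nat.sub_self, pow_zero, Module.End.one_apply]
    rw [hsum, hfirst, add_sub_cancel_left]
    refine Submodule.sum_mem _ ?_
    intro i hi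
    rcases Nat.lt_or_ge (i:ℕ) (C.hU x) with hlt | hge
    · rw [C.coord_lt_hU hlt, zero_smul]
      exact zero_mem _
    · have hne : (i:ℕ) ≠ C.hU x := by
        intro hc
        exact (Finset.mem_erase.1 hi).1 (Fin.ext hc)
      exact Submodule.smul_mem _ _ (C.fu_mem_Ua' (by omega))
  · exact zero_mem _

theorem zW_mem (x : V) : C.zW x ∈ C.Ua 0 ⊔ C.Wb 1 := by
  rw [zW]
  split
  · rename_i h
    refine Submodule.mem_sup_right ?_
    have hsum : C.vT x
        = (C.B.repr x (Sum.inr ⟨C.hW x, h⟩))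
            • ((C.f^((C.hW x) - C.hW x)) C.v)
          + ∑ j ∈ Finset.univ.erase (⟨C.hW x, h⟩ : Fin C.S),
              (C.B.repr x (Sum.inr j)) • ((C.f^((j:ℕ) - C.hW x)) C.v) := by
      rw [vT]
      exact (Finset.add_sum_erase _ _ (Finset.mem_univ _)).symm
    have hfirst : (C.B.repr x (Sum.inr ⟨C.hW x, h⟩))
        • ((C.f^((C.hW x) - C.hW x)) C.v) = C.v := by
      rw [C.coord_hW_one h, one_smul, Nat.sub_self, pow_zero, Module.End.one_apply]
    rw [hsum, hfirst, add_sub_cancel_left]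
    refine Submodule.sum_mem _ ?_
    intro j hj
    rcases Nat.lt_or_ge (j:ℕ) (C.hW x) with hlt | hge
    · rw [C.coord_lt_hW hlt, zero_smul]
      exact zero_mem _
    · have hne : (j:ℕ) ≠ C.hW x := by
        intro hc
        exact (Finset.mem_erase.1 hj).1 (Fin.ext hc)
      exact Submodule.smul_mem _ _ (C.fv_mem_Wb' (by omega))
  · exact zero_mem _

theorem fz1 (x : V) : (C.f^(C.hU x)) C.u + (C.f^(C.hU x)) (C.zU x)
    = ∑ i : Fin C.R, (C.B.repr x (Sum.inl i)) • C.B (Sum.inl i) := by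
  have hterm : ∀ i : Fin C.R,
      (C.B.repr x (Sum.inl i)) • ((C.f^(C.hU x)) ((C.f^((i:ℕ) - C.hU x)) C.u))
        = (C.B.repr x (Sum.inl i)) • C.B (Sum.inl i) := by
    intro i
    rcases Nat.lt_or_ge (i:ℕ) (C.hU x) with hlt | hge
    · rw [C.coord_lt_hU hlt, zero_smul, zero_smul]
    · congr 1
      rw [← Module.End.mul_apply, ← pow_add]
      have : C.hU x + ((i:ℕ) - C.hU x) = (i:ℕ) := by omega
      rw [this, C.B_inl]
  rw [zU]
  split
  · rename_i h
    rw [map_sub]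
    have huT : (C.f^(C.hU x)) (C.uT x)
        = ∑ i : Fin C.R, (C.B.repr x (Sum.inl i)) • C.B (Sum.inl i) := by
      rw [uT, map_sum]
      refine Finset.sum_congr rfl fun i _ => ?_
      rw [map_smul]
      exact hterm i
    rw [huT]
    abel
  · rename_i h
    have hR : C.hU x = C.R := by have := C.hU_le x; omega
    rw [map_zero, add_zero, hR, C.fR_u]
    symm
    refine Finset.sum_eq_zero fun i _ => ?_
    have : C.B.repr x (Sum.inl i) = 0 := C.coord_lt_hU (by omega)
    rw [this, zero_smul]

theorem fz2 (x : V) : (C.f^(C.hW x)) C.v + (C.f^(C.hW x)) (C.zW x)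
    = ∑ j : Fin C.S, (C.B.repr x (Sum.inr j)) • C.B (Sum.inr j) := by
  have hterm : ∀ j : Fin C.S,
      (C.B.repr x (Sum.inr j)) • ((C.f^(C.hW x)) ((C.f^((j:ℕ) - C.hW x)) C.v))
        = (C.B.repr x (Sum.inr j)) • C.B (Sum.inr j) := by
    intro j
    rcases Nat.lt_or_ge (j:ℕ) (C.hW x) with hlt | hge
    · rw [C.coord_lt_hW hlt, zero_smul, zero_smul]
    · congr 1
      rw [← Module.End.mul_apply, ← pow_add]
      have : C.hW x + ((j:ℕ) - C.hW x) = (j:ℕ) := by omega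
      rw [this, C.B_inr]
  rw [zW]
  split
  · rename_i h
    rw [map_sub]
    have hvT : (C.f^(C.hW x)) (C.vT x)
        = ∑ j : Fin C.S, (C.B.repr x (Sum.inr j)) • C.B (Sum.inr j) := by
      rw [vT, map_sum]
      refine Finset.sum_congr rfl fun j _ => ?_
      rw [map_smul]
      exact hterm j
    rw [hvT]
    abel
  · rename_i h
    have hS : C.hW x = C.S := by have := C.hW_le x; omega
    rw [map_zero, add_zero, hS, C.fS_v]
    symm
    refine Finset.sum_eq_zero fun j _ => ?_
    have : C.B.repr x (Sum.inr j) = 0 := C.coord_lt_hW (by omega)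
    rw [this, zero_smul]

/-- Normal form: every vector is the image of `f^(hU x) u + f^(hW x) v` under a
commuting automorphism. -/
theorem normal_form (x : V) : ∃ α : V ≃ₗ[ZMod 2] V, Commutes C.f α ∧
    α ((C.f^(C.hU x)) C.u + (C.f^(C.hW x)) C.v) = x := by
  refine ⟨C.mkAuto (C.zU_mem x) (C.zW_mem x), C.mkAuto_commutes _ _, ?_⟩
  rw [map_add, C.mkAuto_fu, C.mkAuto_fv, C.fz1, C.fz2]
  have h := C.B.sum_repr x
  rw [Fintype.sum_sum_type] at h
  exact h

end Setup
theorem charHull_zero {f : V →ₗ[ZMod 2] V} : charHull f {(0:V)} = ⊥ := by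
  refine le_antisymm (Submodule.span_le.2 ?_) bot_le
  rintro y ⟨b, hb, i, α, hα, rfl⟩
  have hb0 : b = 0 := hb
  subst hb0
  simp

namespace Setup

variable {V : Type*} [AddCommGroup V] [Module (ZMod 2) V] (C : Setup V)

theorem hW_fu (k : ℕ) : C.hW ((C.f^k) C.u) = C.S := by
  refine le_antisymm (C.hW_le _) (C.hW_ge le_rfl ?_)
  intro j _
  by_cases hk : k < C.R
  · rw [C.repr_fu ⟨k, hk⟩]
    exact Finsupp.single_eq_of_ne (by simp)
  · rw [C.fpow_u_zero k (by omega), map_zero, Finsupp.zero_apply]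

theorem hU_fv' (k : ℕ) : C.hU ((C.f^k) C.v) = C.R := by
  refine le_antisymm (C.hU_le _) (C.hU_ge le_rfl ?_)
  intro i _
  by_cases hk : k < C.S
  · rw [C.repr_fv ⟨k, hk⟩]
    exact Finsupp.single_eq_of_ne (by simp)
  · rw [C.fpow_v_zero k (by omega), map_zero, Finsupp.zero_apply]

theorem hull_pure_v (b : ℕ) :
    charHull C.f {(C.f^C.R) C.u + (C.f^b) C.v} = C.Ua b ⊔ C.Wb b := by
  rcases le_or_gt b C.R with h | h
  · exact C.hull_case1 C.R b h
  · rcases lt_or_ge b C.S with hbS | hbS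
    · rw [C.hull_case3 C.R b h (by omega), C.fR_u, zero_add]
      have e1 : cyc C.f ((C.f^b) C.v) = C.Wb b := rfl
      rw [e1, C.Ua_bot (a := C.R+1) (by omega), bot_sup_eq,
        C.Ua_bot (a := b) (by omega), bot_sup_eq, sup_eq_left]
      exact C.Wb_mono (by omega)
    · rw [C.fR_u, C.fpow_v_zero b hbS, zero_add, charHull_zero,
        C.Ua_bot (a := b) (by omega), C.Wb_bot (b := b) (by omega), sup_bot_eq]

theorem elem_cases {X : Submodule (ZMod 2) V} (hX : Charinv C.f X) {x : V} (hx : x ∈ X) :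
    ((C.f^(C.hU x)) C.u + (C.f^(C.hW x)) C.v ∈ X)
    ∧ charHull C.f {(C.f^(C.hU x)) C.u + (C.f^(C.hW x)) C.v} ≤ X := by
  obtain ⟨α, hα, hval⟩ := C.normal_form x
  have hx' : (C.f^(C.hU x)) C.u + (C.f^(C.hW x)) C.v ∈ X := by
    have h := hX.2 α.symm (commutes_symm hα) x hx
    rw [← hval, α.symm_apply_apply] at h
    exact h
  exact ⟨hx', charHull_le_of_charinv hX hx'⟩

theorem forward {X : Submodule (ZMod 2) V} (hX : Charinv C.f X)
    (hNH : ¬ Hyperinv C.f X) :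
    ∃ a b : ℕ, a < C.R ∧ a < b ∧ b + C.R < a + C.S ∧
      X = charHull C.f {(C.f^a) C.u + (C.f^b) C.v} := by
  have hRS := C.hRS
  -- minima of heights over X
  set DU : Set ℕ := {a | ∃ x ∈ (X : Set V), C.hU x = a} with hDU
  set DW : Set ℕ := {b | ∃ x ∈ (X : Set V), C.hW x = b} with hDW
  have hDUne : DU.Nonempty := ⟨C.hU 0, 0, X.zero_mem, rfl⟩
  have hDWne : DW.Nonempty := ⟨C.hW 0, 0, X.zero_mem, rfl⟩
  set dU := sInf DU with hdU
  set dW := sInf DW with hdW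
  obtain ⟨x₁, hx₁X, hx₁⟩ := Nat.sInf_mem hDUne
  obtain ⟨x₂, hx₂X, hx₂⟩ := Nat.sInf_mem hDWne
  rw [← hdU] at hx₁
  rw [← hdW] at hx₂
  have hdU_le : ∀ x ∈ X, dU ≤ C.hU x := fun x hx => Nat.sInf_le ⟨x, hx, rfl⟩
  have hdW_le : ∀ x ∈ X, dW ≤ C.hW x := fun x hx => Nat.sInf_le ⟨x, hx, rfl⟩
  have hdUR : dU ≤ C.R := by rw [← hx₁]; exact C.hU_le x₁
  have hdWS : dW ≤ C.S := by rw [← hx₂]; exact C.hW_le x₂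
  -- pure element consequences
  have hpureU : (C.f^dU) C.u ∈ X → C.Ua dU ⊔ C.Wb (C.S - C.R + dU) ≤ X := by
    intro hm
    rcases lt_or_ge dU C.R with h | h
    · obtain ⟨-, hle⟩ := C.elem_cases hX hm
      rw [C.hU_fu h, C.hW_fu dU] at hle
      rw [C.hull_case2 dU C.S (by omega) (by omega)] at hle
      exact hle
    · have h1 : C.Ua dU = ⊥ := C.Ua_bot (by omega)
      have h2 : C.Wb (C.S - C.R + dU) = ⊥ := C.Wb_bot (by omega)
      rw [h1, h2, sup_bot_eq]
      exact bot_le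
  have hpureV : (C.f^dW) C.v ∈ X → C.Ua dW ⊔ C.Wb dW ≤ X := by
    intro hm
    rcases lt_or_ge dW C.S with h | h
    · obtain ⟨-, hle⟩ := C.elem_cases hX hm
      rw [C.hU_fv' dW, C.hU_fv h, C.hull_pure_v dW] at hle
      exact hle
    · have h1 : C.Ua dW = ⊥ := C.Ua_bot (by omega)
      have h2 : C.Wb dW = ⊥ := C.Wb_bot (by omega)
      rw [h1, h2, sup_bot_eq]
      exact bot_le
  -- D2 : both pure elements present leads to hyperinvariance
  have hD2 : (C.f^dU) C.u ∈ X → (C.f^dW) C.v ∈ X → False := by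
    intro h1 h2
    apply hNH
    have hle1 := hpureU h1
    have hle2 := hpureV h2
    have hXeq : X = C.Ua dU ⊔ C.Wb dW := by
      apply le_antisymm
      · intro x hx
        exact C.UW_mono (hdU_le x hx) (hdW_le x hx) (C.mem_UW_heights x)
      · exact sup_le (le_sup_left.trans hle1) (le_sup_right.trans hle2)
    rw [hXeq]
    apply C.hyper_UW
    · rcases lt_or_ge dW C.R with h | h
      · left
        have hmem : (C.f^dW) C.u ∈ X := hle2 (Submodule.mem_sup_left (C.fu_mem_Ua dW))
        have := hdU_le _ hmem
        rwa [C.hU_fu h] at this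
      · right; exact h
    · rcases lt_or_ge dU C.R with h | h
      · left
        have hmem : (C.f^(C.S - C.R + dU)) C.v ∈ X :=
          hle1 (Submodule.mem_sup_right (C.fv_mem_Wb _))
        have := hdW_le _ hmem
        rwa [C.hU_fv (by omega)] at this
      · right; exact h
  -- the per-element dichotomy
  have hcase : ∀ x ∈ X,
      ((C.f^(C.hU x)) C.u ∈ X ∧ (C.f^(C.hW x)) C.v ∈ X)
      ∨ (C.hU x < C.R ∧ C.hU x < C.hW x ∧ C.hW x + C.R < C.hU x + C.S ∧
          charHull C.f {(C.f^(C.hU x)) C.u + (C.f^(C.hW x)) C.v} ≤ X ∧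
          (C.f^(C.hU x)) C.u + (C.f^(C.hW x)) C.v ∈ X) := by
    intro x hx
    obtain ⟨hmem, hle⟩ := C.elem_cases hX hx
    by_cases h1 : C.hW x ≤ C.hU x
    · left
      rw [C.hull_case1 _ _ h1] at hle
      exact ⟨hle (Submodule.mem_sup_left (C.fu_mem_Ua' h1)),
        hle (Submodule.mem_sup_right (C.fv_mem_Wb _))⟩
    push_neg at h1
    by_cases h2 : C.hU x + C.S ≤ C.hW x + C.R
    · left
      rw [C.hull_case2 _ _ h1 h2] at hle
      refine ⟨hle (Submodule.mem_sup_left (C.fu_mem_Ua _)),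
        hle (Submodule.mem_sup_right (C.fv_mem_Wb' (by omega)))⟩
    push_neg at h2
    by_cases h3 : C.hU x < C.R
    · right; exact ⟨h3, h1, h2, hle, hmem⟩
    · left
      have haR : C.hU x = C.R := le_antisymm (C.hU_le x) (by omega)
      constructor
      · rw [haR, C.fR_u]; exact zero_mem _
      · rw [haR, C.hull_pure_v _] at hle
        exact hle (Submodule.mem_sup_right (C.fv_mem_Wb _))
  -- main case split
  rcases hcase x₁ hx₁X with hL1 | hG1
  · rcases hcase x₂ hx₂X with hL2 | hG2
    · exact absurd (hD2 (hx₁ ▸ hL1.1) (hx₂ ▸ hL2.2)) not_false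
    · -- x₁ pure-u present, x₂ good
      exfalso
      have hU1 : (C.f^dU) C.u ∈ X := hx₁ ▸ hL1.1
      have hUle : C.Ua dU ⊔ C.Wb (C.S - C.R + dU) ≤ X := hpureU hU1
      have ha2 : (C.f^(C.hU x₂)) C.u ∈ X :=
        hUle (Submodule.mem_sup_left (C.fu_mem_Ua' (hdU_le x₂ hx₂X)))
      have hv2 : (C.f^(C.hW x₂)) C.v ∈ X := by
        have := X.sub_mem hG2.2.2.2.2 ha2
        rwa [add_sub_cancel_left] at this
      exact hD2 hU1 (hx₂ ▸ hv2)
  · -- x₁ good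
    have hG1' := hG1
    rw [hx₁] at hG1'
    have hdUR' : dU < C.R := hG1'.1
    have hb₁ : dW ≤ C.hW x₁ := hdW_le x₁ hx₁X
    have hnotV : (C.f^dW) C.v ∉ X := by
      intro h
      have hWle : C.Ua dW ⊔ C.Wb dW ≤ X := hpureV h
      have hb1v : (C.f^(C.hW x₁)) C.v ∈ X :=
        hWle (Submodule.mem_sup_right (C.fv_mem_Wb' hb₁))
      have hu1 : (C.f^dU) C.u ∈ X := by
        have := X.sub_mem hG1'.2.2.2.2 hb1v
        rwa [add_sub_cancel_right] at this
      exact hD2 hu1 h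
    have hnotU : (C.f^dU) C.u ∉ X := by
      intro h
      have hUle := hpureU h
      rcases hcase x₂ hx₂X with hL2 | hG2
      · exact hnotV (hx₂ ▸ hL2.2)
      · have ha2 : (C.f^(C.hU x₂)) C.u ∈ X :=
          hUle (Submodule.mem_sup_left (C.fu_mem_Ua' (hdU_le x₂ hx₂X)))
        have hv2 : (C.f^(C.hW x₂)) C.v ∈ X := by
          have := X.sub_mem hG2.2.2.2.2 ha2
          rwa [add_sub_cancel_left] at this
        exact hnotV (hx₂ ▸ hv2)
    -- Ua (dU+1) ≤ X from x₁'s hull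
    have hUa1 : C.Ua (dU + 1) ≤ X := by
      have hle := hG1'.2.2.2.1
      rw [C.hull_case3 _ _ hG1'.2.1 hG1'.2.2.1] at hle
      exact ((le_sup_left.trans le_sup_right).trans hle)
    -- x₂ must be good as well
    have hG2 : C.hU x₂ < C.R ∧ C.hU x₂ < dW ∧ dW + C.R < C.hU x₂ + C.S ∧
        charHull C.f {(C.f^(C.hU x₂)) C.u + (C.f^dW) C.v} ≤ X ∧
        (C.f^(C.hU x₂)) C.u + (C.f^dW) C.v ∈ X := by
      rcases hcase x₂ hx₂X with hL2 | hG2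
      · exact absurd (hx₂ ▸ hL2.2) hnotV
      · rw [hx₂] at hG2; exact hG2
    -- a₂ = dU
    have ha₂ : C.hU x₂ = dU := by
      by_contra hne
      have : dU + 1 ≤ C.hU x₂ := by
        have := hdU_le x₂ hx₂X; omega
      have hu2 : (C.f^(C.hU x₂)) C.u ∈ X := hUa1 (C.fu_mem_Ua' this)
      have hv2 : (C.f^dW) C.v ∈ X := by
        have := X.sub_mem hG2.2.2.2.2 hu2
        rwa [add_sub_cancel_left] at this
      exact hnotV hv2
    have hWb1 : C.Wb (dW + 1) ≤ X := by
      have hle := hG2.2.2.2.1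
      rw [C.hull_case3 _ _ hG2.2.1 hG2.2.2.1] at hle
      exact ((le_sup_right.trans le_sup_right).trans hle)
    -- b₁ = dW
    have hb₁' : C.hW x₁ = dW := by
      by_contra hne
      have hgt : dW + 1 ≤ C.hW x₁ := by omega
      have hv1 : (C.f^(C.hW x₁)) C.v ∈ X := hWb1 (C.fv_mem_Wb' hgt)
      have hu1 : (C.f^dU) C.u ∈ X := by
        have := X.sub_mem hG1'.2.2.2.2 hv1
        rwa [add_sub_cancel_right] at this
      exact hnotU hu1
    -- the good pair (dU, dW)
    have hdUdW : dU < dW := by rw [← hb₁']; exact hG1'.2.1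
    have hcond : dW + C.R < dU + C.S := by rw [← hb₁']; exact hG1'.2.2.1
    have hdWS' : dW < C.S := by omega
    have hx₀X : (C.f^dU) C.u + (C.f^dW) C.v ∈ X := by
      rw [← hb₁']; exact hG1'.2.2.2.2
    have hhullle : charHull C.f {(C.f^dU) C.u + (C.f^dW) C.v} ≤ X := by
      rw [← hb₁']; exact hG1'.2.2.2.1
    set x₀ := (C.f^dU) C.u + (C.f^dW) C.v with hx₀def
    -- coordinates of x₀
    have hreprx₀ : C.B.repr x₀ = Finsupp.single (Sum.inl ⟨dU, hdUR'⟩) 1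
        + Finsupp.single (Sum.inr ⟨dW, hdWS'⟩) 1 := by
      rw [hx₀def, map_add, C.repr_fu ⟨dU, hdUR'⟩, C.repr_fv ⟨dW, hdWS'⟩]
    -- the KEY step
    have hKEY : ∀ y ∈ X, dU + 1 ≤ C.hU y → C.hW y = dW → False := by
      intro y hy hhUy hhWy
      rcases hcase y hy with hL | hG
      · exact hnotV (hhWy ▸ hL.2)
      · have h1 : (C.f^(C.hU y)) C.u ∈ X := hUa1 (C.fu_mem_Ua' hhUy)
        have h2 : (C.f^(C.hW y)) C.v ∈ X := by
          have := X.sub_mem hG.2.2.2.2 h1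
          rwa [add_sub_cancel_left] at this
        exact hnotV (hhWy ▸ h2)
    -- X ≤ hull
    have hXle : X ≤ charHull C.f {x₀} := by
      intro x hx
      set c := C.B.repr x (Sum.inl ⟨dU, hdUR'⟩) with hc
      set d := C.B.repr x (Sum.inr ⟨dW, hdWS'⟩) with hd
      have hcoordlowU : ∀ i : Fin C.R, (i:ℕ) < dU → C.B.repr x (Sum.inl i) = 0 := by
        intro i hi
        exact C.coord_lt_hU (by have := hdU_le x hx; omega)
      have hcoordlowW : ∀ j : Fin C.S, (j:ℕ) < dW → C.B.repr x (Sum.inr j) = 0 := by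
        intro j hj
        exact C.coord_lt_hW (by have := hdW_le x hx; omega)
      have hcd : c = d := by
        by_contra hne
        set y := x - c • x₀ with hy
        have hyX : y ∈ X := X.sub_mem hx (X.smul_mem c hx₀X)
        have hrepry : ∀ p, C.B.repr y p = C.B.repr x p - c * (C.B.repr x₀ p) := by
          intro p
          rw [hy, map_sub, map_smul]
          rfl
        have hyU : ∀ i : Fin C.R, (i:ℕ) < dU + 1 → C.B.repr y (Sum.inl i) = 0 := by
          intro i hi
          rw [hrepry, hreprx₀, Finsupp.add_apply]
          rcases Nat.lt_or_ge (i:ℕ) dU with h | h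
          · rw [hcoordlowU i h, Finsupp.single_eq_of_ne (by
                intro hcon
                have := congrArg Fin.val (Sum.inl.inj hcon)
                simp at this; omega),
              Finsupp.single_eq_of_ne (by simp)]
            ring
          · have hieq : i = ⟨dU, hdUR'⟩ := Fin.ext (show (i:ℕ) = dU by omega)
            rw [hieq, Finsupp.single_eq_same, Finsupp.single_eq_of_ne (by simp), ← hc]
            ring
        have hyW0 : C.B.repr y (Sum.inr ⟨dW, hdWS'⟩) = d - c := by
          rw [hrepry, hreprx₀, Finsupp.add_apply, Finsupp.single_eq_of_ne (by simp),
            Finsupp.single_eq_same, ← hd]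
          ring
        have hyWlow : ∀ j : Fin C.S, (j:ℕ) < dW → C.B.repr y (Sum.inr j) = 0 := by
          intro j hj
          rw [hrepry, hreprx₀, Finsupp.add_apply, Finsupp.single_eq_of_ne (by simp),
            Finsupp.single_eq_of_ne (by
              intro hcon
              have := congrArg Fin.val (Sum.inr.inj hcon)
              simp at this; omega),
            hcoordlowW j hj]
          ring
        have hhUy : dU + 1 ≤ C.hU y := C.hU_ge (by omega) hyU
        have hhWy : C.hW y = dW := by
          apply le_antisymm
          · refine C.hW_le_of_coord (j := ⟨dW, hdWS'⟩) ?_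
            rw [hyW0]
            intro hcon
            apply hne
            exact (sub_eq_zero.1 hcon).symm
          · exact C.hW_ge (by omega) hyWlow
        exact hKEY y hyX hhUy hhWy
      -- now conclude membership
      have hymem : x - c • x₀ ∈ C.Ua (dU+1) ⊔ C.Wb (dW+1) := by
        rw [mem_UW_iff]
        intro p hp
        have hrepry : ∀ p, C.B.repr (x - c • x₀) p
            = C.B.repr x p - c * (C.B.repr x₀ p) := by
          intro p
          rw [map_sub, map_smul]
          rfl
        rcases p with i | j
        · refine Or.inl ⟨i, rfl, ?_⟩
          by_contra hcon
          refine (Finsupp.mem_support_iff.1 hp) ?_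
          rw [hrepry, hreprx₀, Finsupp.add_apply]
          rcases Nat.lt_or_ge (i:ℕ) dU with h | h
          · rw [hcoordlowU i h, Finsupp.single_eq_of_ne (by
                intro hcc
                have := congrArg Fin.val (Sum.inl.inj hcc)
                simp at this; omega),
              Finsupp.single_eq_of_ne (by simp)]
            ring
          · have hieq : i = ⟨dU, hdUR'⟩ := Fin.ext (show (i:ℕ) = dU by omega)
            rw [hieq, Finsupp.single_eq_same, Finsupp.single_eq_of_ne (by simp), ← hc]
            ring
        · refine Or.inr ⟨j, rfl, ?_⟩
          by_contra hcon
          refine (Finsupp.mem_support_iff.1 hp) ?_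
          rw [hrepry, hreprx₀, Finsupp.add_apply, Finsupp.single_eq_of_ne (by simp)]
          rcases Nat.lt_or_ge (j:ℕ) dW with h | h
          · rw [hcoordlowW j h, Finsupp.single_eq_of_ne (by
                intro hcc
                have := congrArg Fin.val (Sum.inr.inj hcc)
                simp at this; omega)]
            ring
          · have hjeq : j = ⟨dW, hdWS'⟩ := Fin.ext (show (j:ℕ) = dW by omega)
            rw [hjeq, Finsupp.single_eq_same, ← hd, hcd]
            ring
      have hUWhull : C.Ua (dU+1) ⊔ C.Wb (dW+1) ≤ charHull C.f {x₀} := by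
        rw [C.hull_case3 _ _ hdUdW hcond]
        exact le_sup_right
      have hfinal : x = (x - c • x₀) + c • x₀ := by abel
      rw [hfinal]
      exact add_mem (hUWhull hymem)
        (Submodule.smul_mem _ _ (mem_charHull_self (f := C.f) (x := x₀)))
    exact ⟨dU, dW, hdUR', hdUdW, hcond, le_antisymm hXle hhullle⟩

end Setup
end Stmt2Aux

theorem stmt2 (V : Type*) [AddCommGroup V] [Module (ZMod 2) V]
    [FiniteDimensional (ZMod 2) V] (f : V →ₗ[ZMod 2] V) (hf : IsNilpotent f)
    (u v : V) (R S : ℕ) (hcompl : IsCompl (cyc f u) (cyc f v))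
    (heu : expnt f u = R) (hev : expnt f v = S) (hRS : R + 1 < S)
    (X : Submodule (ZMod 2) V) (hXinv : ∀ x ∈ X, f x ∈ X) :
    (Charinv f X ∧ ¬ Hyperinv f X) ↔
      ∃ s q : ℕ, 0 < s ∧ s ≤ R ∧ s < q ∧ (R : ℤ) - s < (S : ℤ) - q ∧
        X = charHull f {(f ^ (R - s)) u + (f ^ (S - q)) v} := by
  classical
  set C : Stmt2Aux.Setup V := ⟨f, u, v, R, S, hf, hcompl, heu, hev, hRS⟩ with hC
  constructor
  · rintro ⟨hchar, hnh⟩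
    obtain ⟨a, b, haR, hab, hcond, hXeq⟩ := C.forward hchar hnh
    have hCR : C.R = R := rfl
    have hCS : C.S = S := rfl
    rw [hCR] at haR
    rw [hCR, hCS] at hcond
    have hbS : b < S := by omega
    refine ⟨R - a, S - b, by omega, by omega, by omega, ?_, ?_⟩
    · push_cast
      omega
    · have e1 : R - (R - a) = a := by omega
      have e2 : S - (S - b) = b := by omega
      rw [e1, e2]
      exact hXeq
  · rintro ⟨s, q, hs0, hsR, hsq, hZ, hXeq⟩
    have hqS : q < S := by omega
    have haR : R - s < R := by omega
    have hbS : S - q < S := by omega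
    have hab : R - s < S - q := by omega
    have hcond : (S - q) + R < (R - s) + S := by omega
    constructor
    · rw [hXeq]
      exact Stmt2Aux.charHull_charinv
    · rw [hXeq]
      exact C.hull_not_hyper (R - s) (S - q) haR hbS hab hcond
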